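/- arXiv:math/0202281 — 9 statements merged into one kernel-verified Lean document; each statement's English description precedes it below -/
import Mathlib

section
/- Two finite Alexander quandles M and N of the same cardinality are isomorphic as quandles if and only if there is an isomorphism of Λ-modules from the submodule (1−t)M onto the submodule (1−t)N. -/
open LaurentPolynomial

private lemma aux_card_quot {M : Type} [AddCommGroup M] [Module (LaurentPolynomial ℤ) M] [Finite M]
    (p : Submodule (LaurentPolynomial ℤ) M) :
    Nat.card M = Nat.card (M ⧸ p) * Nat.card p :=
  AddSubgroup.card_eq_card_quotient_mul_card_addSubgroup p.toAddSubgroup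

private lemma aux_forward {M N : Type} [AddCommGroup M] [Module (LaurentPolynomial ℤ) M]
    [AddCommGroup N] [Module (LaurentPolynomial ℤ) N]
    (f : M → N) (hbij : Function.Bijective f)
    (hq : ∀ a b : M,
      f ((T 1 : LaurentPolynomial ℤ) • a + ((1 : LaurentPolynomial ℤ) - T 1) • b)
        = (T 1 : LaurentPolynomial ℤ) • f a + ((1 : LaurentPolynomial ℤ) - T 1) • f b) :
    Nonempty
      ((LinearMap.range (LinearMap.lsmul (LaurentPolynomial ℤ) M ((1 : LaurentPolynomial ℤ) - T 1)))
        ≃ₗ[LaurentPolynomial ℤ]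
       (LinearMap.range (LinearMap.lsmul (LaurentPolynomial ℤ) N ((1 : LaurentPolynomial ℤ) - T 1)))) := by
  set Λ := LaurentPolynomial ℤ
  set τ : Λ := T 1 with hτ
  set u : Λ := (1 : Λ) - T 1 with hu
  set SM := LinearMap.range (LinearMap.lsmul Λ M u) with hSM
  set SN := LinearMap.range (LinearMap.lsmul Λ N u) with hSN
  have memM : ∀ m : M, u • m ∈ SM := fun m => ⟨m, rfl⟩
  have memN : ∀ n : N, u • n ∈ SN := fun n => ⟨n, rfl⟩
  set g : M → N := fun m => f m - f 0 with hgdef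
  have hgbij : Function.Bijective g := (Equiv.subRight (f 0)).bijective.comp hbij
  have hone : τ + u = 1 := by rw [hτ, hu]; ring
  have hg : ∀ a b : M, g (τ • a + u • b) = τ • g a + u • g b := by
    intro a b
    have h0 : τ • f 0 + u • f 0 = f 0 := by rw [← add_smul, hone, one_smul]
    show f (τ • a + u • b) - f 0 = τ • (f a - f 0) + u • (f b - f 0)
    rw [hq, hτ, hu]
    module
  have hg0 : g 0 = 0 := sub_self _
  have hgτ : ∀ a, g (τ • a) = τ • g a := by
    intro a
    have := hg a 0
    simpa [hg0] using this
  have hgu : ∀ b, g (u • b) = u • g b := by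
    intro b
    have := hg 0 b
    simpa [hg0] using this
  have hTT : (T (-1) : Λ) * T 1 = 1 := by rw [← T_add]; norm_num
  have hTT' : (T 1 : Λ) * T (-1) = 1 := by rw [← T_add]; norm_num
  have hTinv : ∀ x : M, τ • (T (-1) : Λ) • x = x := fun x => by
    rw [hτ, ← mul_smul, hTT', one_smul]
  have hTinvN : ∀ x : N, τ • (T (-1) : Λ) • x = x := fun x => by
    rw [hτ, ← mul_smul, hTT', one_smul]
  have hgτ' : ∀ x, g ((T (-1) : Λ) • x) = (T (-1) : Λ) • g x := by
    intro x
    have h1 := hgτ ((T (-1) : Λ) • x)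
    rw [hTinv] at h1
    have h2 : (T (-1) : Λ) • g x = g ((T (-1) : Λ) • x) := by
      rw [h1, ← mul_smul, hTT, one_smul]
    exact h2.symm
  have haddu : ∀ a b : M, g (u • a + u • b) = g (u • a) + g (u • b) := by
    intro a b
    have h1 : u • a + u • b = τ • ((T (-1) : Λ) • (u • a)) + u • b := by rw [hTinv]
    rw [h1, hg, hgτ', hTinvN, ← hgu]
  have hadd2 : ∀ x y : M, x ∈ SM → y ∈ SM → g (x + y) = g x + g y := by
    rintro _ _ ⟨a, rfl⟩ ⟨b, rfl⟩
    exact haddu a b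
  have hmem : ∀ x : M, x ∈ SM → g x ∈ SN := by
    rintro _ ⟨a, rfl⟩
    exact ⟨g a, by simpa using (hgu a).symm⟩
  set e₀ : SM →+ SN := AddMonoidHom.mk' (fun s => ⟨g s.1, hmem s.1 s.2⟩)
    (by rintro ⟨x, hx⟩ ⟨y, hy⟩; exact Subtype.ext (hadd2 x y hx hy)) with he₀
  have hz : ∀ (a : ℤ) (x : M), x ∈ SM → g (a • x) = a • g x := by
    intro a x hx
    have := map_zsmul e₀ a ⟨x, hx⟩
    have h2 := congrArg Subtype.val this
    exact h2
  have hTn : ∀ (n : ℤ) (x : M), g ((T n : Λ) • x) = (T n : Λ) • g x := by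
    intro n
    induction n using Int.induction_on with
    | zero => intro x; simp [T_zero]
    | succ k ih =>
      intro x
      have h1 : ((k : ℤ) + 1) = 1 + (k : ℤ) := by ring
      rw [h1, T_add, mul_smul, hgτ, ih, mul_smul]
    | pred k ih =>
      intro x
      have h1 : (-(k : ℤ) - 1) = -1 + -(k : ℤ) := by ring
      rw [h1, T_add, mul_smul, hgτ', ih, mul_smul]
  have hsmul : ∀ (p : Λ) (s : M), s ∈ SM → g (p • s) = p • g s := by
    intro p
    induction p using LaurentPolynomial.induction_on' with
    | add p q hp hq' =>
      intro s hs
      rw [add_smul, hadd2 _ _ (SM.smul_mem p hs) (SM.smul_mem q hs), hp s hs, hq' s hs, add_smul]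
    | C_mul_T n a =>
      intro s hs
      have h1 : (C a * T n : Λ) • s = (a : ℤ) • ((T n : Λ) • s) := by
        rw [mul_smul, C_eq_algebraMap, algebraMap_smul]
      have h2 : (C a * T n : Λ) • g s = (a : ℤ) • ((T n : Λ) • g s) := by
        rw [mul_smul, C_eq_algebraMap, algebraMap_smul]
      rw [h1, h2, hz a _ (SM.smul_mem _ hs), hTn]
  set E : SM →ₗ[Λ] SN :=
    { toFun := e₀, map_add' := e₀.map_add,
      map_smul' := fun p s => Subtype.ext (by exact hsmul p s.1 s.2) } with hE
  have hinj : Function.Injective E := by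
    intro s t h
    exact Subtype.ext (hgbij.1 (congrArg Subtype.val h))
  have hsurj : Function.Surjective E := by
    rintro ⟨_, b, rfl⟩
    obtain ⟨m, hm⟩ := hgbij.2 b
    refine ⟨⟨u • m, memM m⟩, Subtype.ext ?_⟩
    show g (u • m) = LinearMap.lsmul Λ N u b
    rw [hgu, hm]
    simp
  exact ⟨LinearEquiv.ofBijective E ⟨hinj, hsurj⟩⟩


private lemma aux_card_quot' {M : Type} [AddCommGroup M] [Module (LaurentPolynomial ℤ) M] [Finite M]
    (p : Submodule (LaurentPolynomial ℤ) M) :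
    Nat.card M = Nat.card (M ⧸ p) * Nat.card p :=
  AddSubgroup.card_eq_card_quotient_mul_card_addSubgroup p.toAddSubgroup

private lemma aux_fiber_card {A Q : Type} [AddCommGroup A] [Module (LaurentPolynomial ℤ) A]
    [AddCommGroup Q] [Module (LaurentPolynomial ℤ) Q] [Finite A] [Finite Q]
    (f : A →ₗ[LaurentPolynomial ℤ] Q) (hf : Function.Surjective f) (q : Q) :
    Nat.card {a // f a = q} * Nat.card Q = Nat.card A := by
  obtain ⟨a0, ha0⟩ := hf q
  have e1 : {a // f a = q} ≃ LinearMap.ker f :=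
    { toFun := fun x => ⟨x.1 - a0, by simp [LinearMap.mem_ker, map_sub, x.2, ha0]⟩
      invFun := fun y => ⟨y.1 + a0, by
        have := LinearMap.mem_ker.mp y.2
        simp [map_add, this, ha0]⟩
      left_inv := fun x => by ext; simp
      right_inv := fun y => by ext; simp }
  have e2 : (A ⧸ LinearMap.ker f) ≃ Q := (f.quotKerEquivOfSurjective hf).toEquiv
  rw [Nat.card_congr e1, aux_card_quot' (LinearMap.ker f), Nat.card_congr e2, Nat.mul_comm]

set_option maxHeartbeats 1000000 in
private lemma aux_backward {M N : Type} [AddCommGroup M] [Module (LaurentPolynomial ℤ) M]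
    [AddCommGroup N] [Module (LaurentPolynomial ℤ) N] [Finite M] [Finite N]
    (hcard : Nat.card M = Nat.card N)
    (e : (LinearMap.range (LinearMap.lsmul (LaurentPolynomial ℤ) M ((1 : LaurentPolynomial ℤ) - T 1)))
          ≃ₗ[LaurentPolynomial ℤ]
         (LinearMap.range (LinearMap.lsmul (LaurentPolynomial ℤ) N ((1 : LaurentPolynomial ℤ) - T 1)))) :
    ∃ f : M → N, Function.Bijective f ∧
      ∀ a b : M,
        f ((T 1 : LaurentPolynomial ℤ) • a + ((1 : LaurentPolynomial ℤ) - T 1) • b)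
          = (T 1 : LaurentPolynomial ℤ) • f a + ((1 : LaurentPolynomial ℤ) - T 1) • f b := by
  classical
  set Λ' := LaurentPolynomial ℤ
  set τ : Λ' := T 1 with hτ
  set u : Λ' := (1 : Λ') - T 1 with hu
  set SM := LinearMap.range (LinearMap.lsmul Λ' M u) with hSMdef
  set SN := LinearMap.range (LinearMap.lsmul Λ' N u) with hSNdef
  have memM : ∀ m : M, (LinearMap.lsmul Λ' M u) m ∈ SM := fun m => ⟨m, rfl⟩
  have memN : ∀ n : N, (LinearMap.lsmul Λ' N u) n ∈ SN := fun n => ⟨n, rfl⟩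
  set μM : M →ₗ[Λ'] SM := LinearMap.codRestrict SM (LinearMap.lsmul Λ' M u) memM with hμM
  set μN : N →ₗ[Λ'] SN := LinearMap.codRestrict SN (LinearMap.lsmul Λ' N u) memN with hμN
  have μMval : ∀ m : M, ((μM m : SM) : M) = u • m := fun m => rfl
  have μNval : ∀ n : N, ((μN n : SN) : N) = u • n := fun n => rfl
  have μMsurj : Function.Surjective μM := by
    rintro ⟨_, m, rfl⟩
    exact ⟨m, rfl⟩
  have μNsurj : Function.Surjective μN := by
    rintro ⟨_, n, rfl⟩
    exact ⟨n, rfl⟩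
  set α : M →ₗ[Λ'] SN := (e : SM →ₗ[Λ'] SN) ∘ₗ μM with hα
  have hαval : ∀ z : M, α z = e (μM z) := fun z => rfl
  set U : Submodule Λ' SN := Submodule.map μN SN with hU
  set φ' : M →ₗ[Λ'] (SN ⧸ U) := U.mkQ ∘ₗ α with hφ'
  set ψ' : N →ₗ[Λ'] (SN ⧸ U) := U.mkQ ∘ₗ μN with hψ'
  have husmul : ∀ s : SN, u • s ∈ U := by
    intro s
    refine ⟨(s : N), s.2, ?_⟩
    apply Subtype.ext
    rw [μNval]
    rfl
  have hSMker : SM ≤ LinearMap.ker φ' := by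
    rintro _ ⟨x, rfl⟩
    have h1 : α ((LinearMap.lsmul Λ' M u) x) = u • (e (μM x)) := by
      show e (μM (u • x)) = u • e (μM x)
      rw [map_smul, map_smul]
    show U.mkQ (α _) = 0
    rw [h1, Submodule.mkQ_apply, Submodule.Quotient.mk_eq_zero]
    exact husmul _
  have hSNker : SN ≤ LinearMap.ker ψ' := by
    rintro _ ⟨x, rfl⟩
    have h1 : μN ((LinearMap.lsmul Λ' N u) x) = u • (μN x) := by
      show μN (u • x) = u • μN x
      rw [map_smul]
    show U.mkQ (μN _) = 0
    rw [h1, Submodule.mkQ_apply, Submodule.Quotient.mk_eq_zero]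
    exact husmul _
  set φb : (M ⧸ SM) →ₗ[Λ'] (SN ⧸ U) := SM.liftQ φ' hSMker with hφb
  set ψb : (N ⧸ SN) →ₗ[Λ'] (SN ⧸ U) := SN.liftQ ψ' hSNker with hψb
  have hφmk : ∀ m : M, φb (Submodule.Quotient.mk m) = U.mkQ (α m) := fun m => rfl
  have hψmk : ∀ n : N, ψb (Submodule.Quotient.mk n) = U.mkQ (μN n) := fun n => rfl
  have hφsurj : Function.Surjective φb := by
    intro q
    obtain ⟨s, rfl⟩ := U.mkQ_surjective q
    obtain ⟨s', rfl⟩ := e.surjective s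
    obtain ⟨m, rfl⟩ := μMsurj s'
    exact ⟨Submodule.Quotient.mk m, rfl⟩
  have hψsurj : Function.Surjective ψb := by
    intro q
    obtain ⟨s, rfl⟩ := U.mkQ_surjective q
    obtain ⟨n, rfl⟩ := μNsurj s
    exact ⟨Submodule.Quotient.mk n, rfl⟩
  haveI : Finite (M ⧸ SM) := Quotient.finite _
  haveI : Finite (N ⧸ SN) := Quotient.finite _
  haveI : Finite (SN ⧸ U) := Quotient.finite _
  have hScard : Nat.card SM = Nat.card SN := Nat.card_congr e.toEquiv
  have hq1 : Nat.card (M ⧸ SM) = Nat.card (N ⧸ SN) := by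
    apply Nat.eq_of_mul_eq_mul_right (Nat.card_pos (α := SN))
    calc Nat.card (M ⧸ SM) * Nat.card SN
        = Nat.card (M ⧸ SM) * Nat.card SM := by rw [hScard]
      _ = Nat.card M := (aux_card_quot' SM).symm
      _ = Nat.card N := hcard
      _ = Nat.card (N ⧸ SN) * Nat.card SN := aux_card_quot' SN
  have hfib : ∀ q : SN ⧸ U, Nat.card {x // φb x = q} = Nat.card {y // ψb y = q} := by
    intro q
    apply Nat.eq_of_mul_eq_mul_right (Nat.card_pos (α := SN ⧸ U))
    rw [aux_fiber_card φb hφsurj q, aux_fiber_card ψb hψsurj q, hq1]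
  have hGex : ∀ q : SN ⧸ U, Nonempty ({x // φb x = q} ≃ {y // ψb y = q}) :=
    fun q => Finite.card_eq.mp (hfib q)
  set G : (M ⧸ SM) ≃ (N ⧸ SN) := Equiv.ofFiberEquiv (fun q => (hGex q).some) with hGdef
  have hG : ∀ x, ψb (G x) = φb x := Equiv.ofFiberEquiv_map _
  have hout : ∀ x : M ⧸ SM, Submodule.Quotient.mk (Quotient.out x) = x := fun x => Quotient.out_eq' x
  have houtN : ∀ y : N ⧸ SN, Submodule.Quotient.mk (Quotient.out y) = y := fun y => Quotient.out_eq' y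
  have key : ∀ x : M ⧸ SM, ∃ w : N,
      μN w = α (Quotient.out x) ∧ Submodule.Quotient.mk w = G x := by
    intro x
    have h2 : U.mkQ (μN (Quotient.out (G x))) = U.mkQ (α (Quotient.out x)) := by
      calc U.mkQ (μN (Quotient.out (G x)))
          = ψb (Submodule.Quotient.mk (Quotient.out (G x))) := (hψmk _).symm
        _ = ψb (G x) := by rw [houtN]
        _ = φb x := hG x
        _ = φb (Submodule.Quotient.mk (Quotient.out x)) := by rw [hout]
        _ = U.mkQ (α (Quotient.out x)) := hφmk _
    have h3 : μN (Quotient.out (G x)) - α (Quotient.out x) ∈ U := by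
      rwa [Submodule.mkQ_apply, Submodule.mkQ_apply, Submodule.Quotient.eq] at h2
    obtain ⟨y, hy, hyeq⟩ := h3
    refine ⟨Quotient.out (G x) - y, ?_, ?_⟩
    · rw [map_sub, hyeq]
      abel
    · have hmky : (Submodule.Quotient.mk y : N ⧸ SN) = 0 := (Submodule.Quotient.mk_eq_zero SN).mpr hy
      rw [Submodule.Quotient.mk_sub, hmky, sub_zero, houtN]
  choose w hw1 hw2 using key
  have hδmem : ∀ m : M, m - Quotient.out (Submodule.Quotient.mk m : M ⧸ SM) ∈ SM := by
    intro m
    rw [← Submodule.Quotient.eq, hout]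
  set δ : M → SM := fun m => ⟨m - Quotient.out (Submodule.Quotient.mk m : M ⧸ SM), hδmem m⟩ with hδ
  set f : M → N := fun m => ((e (δ m) : SN) : N) + w (Submodule.Quotient.mk m) with hf
  have hwval : ∀ x : M ⧸ SM, ((e (μM (Quotient.out x)) : SN) : N) = u • w x := by
    intro x
    rw [← hαval, ← hw1, μNval]
  have hmkab : ∀ a b : M,
      (Submodule.Quotient.mk (τ • a + u • b) : M ⧸ SM) = Submodule.Quotient.mk a := by
    intro a b
    rw [Submodule.Quotient.eq]
    refine ⟨b - a, ?_⟩
    show u • (b - a) = τ • a + u • b - a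
    rw [hτ, hu]
    module
  have hclass : ∀ m : M,
      (Submodule.Quotient.mk (f m) : N ⧸ SN) = G (Submodule.Quotient.mk m) := by
    intro m
    rw [hf]
    simp only
    rw [Submodule.Quotient.mk_add, (Submodule.Quotient.mk_eq_zero SN).mpr (e (δ m)).2, zero_add,
      hw2]
  refine ⟨f, ⟨?_, ?_⟩, ?_⟩
  · -- injective
    intro m m' hmm'
    have h2 : (Submodule.Quotient.mk m : M ⧸ SM) = Submodule.Quotient.mk m' := by
      apply G.injective
      rw [← hclass, ← hclass, hmm']
    have h3 : ((e (δ m)) : N) = ((e (δ m')) : N) := by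
      have h := hmm'
      rw [hf] at h
      simp only at h
      rw [h2] at h
      exact add_right_cancel h
    have h4 : δ m = δ m' := e.injective (Subtype.ext h3)
    have h5 := congrArg Subtype.val h4
    simp only [hδ] at h5
    rw [h2] at h5
    exact sub_left_inj.mp h5
  · -- surjective
    intro n
    obtain ⟨x, hx⟩ := G.surjective (Submodule.Quotient.mk n)
    have h1 : n - w x ∈ SN := by
      rw [← Submodule.Quotient.eq, hw2 x, hx]
    refine ⟨((e.symm ⟨n - w x, h1⟩ : SM) : M) + Quotient.out x, ?_⟩
    have hmk : (Submodule.Quotient.mk (((e.symm ⟨n - w x, h1⟩ : SM) : M) + Quotient.out x) : M ⧸ SM)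
        = x := by
      rw [Submodule.Quotient.mk_add, (Submodule.Quotient.mk_eq_zero SM).mpr (e.symm _).2, zero_add,
        hout]
    have hδs : δ (((e.symm ⟨n - w x, h1⟩ : SM) : M) + Quotient.out x) = e.symm ⟨n - w x, h1⟩ := by
      apply Subtype.ext
      simp only [hδ]
      rw [hmk]
      abel
    rw [hf]
    simp only
    rw [hδs, hmk, LinearEquiv.apply_symm_apply]
    simp
  · -- quandle homomorphism
    intro a b
    have hδab : δ (τ • a + u • b)
        = τ • δ a + u • δ b + μM (Quotient.out (Submodule.Quotient.mk b : M ⧸ SM))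
            - μM (Quotient.out (Submodule.Quotient.mk a : M ⧸ SM)) := by
      apply Subtype.ext
      simp only [hδ]
      rw [hmkab a b]
      push_cast [Submodule.coe_smul, μMval]
      rw [hτ, hu]
      module
    rw [hf]
    simp only
    rw [hmkab a b, hδab, map_sub, map_add, map_add, map_smul, map_smul]
    push_cast [Submodule.coe_smul]
    rw [hwval, hwval]
    rw [hτ, hu]
    module

/-- **Theorem 1 (Nelson).** Two finite Alexander quandles `M` and `N` of the same
cardinality are isomorphic as quandles iff there is an isomorphism of
`Λ = ℤ[t,t⁻¹]`-modules `(1-t)M ≃ (1-t)N`.  The quandle operation on a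
`Λ`-module is `a ^ b = t•a + (1-t)•b`, and `(1-t)M` is the range of
multiplication by `1 - t`. -/
theorem finite_alexander_quandles_iso_iff
    (M N : Type) [AddCommGroup M] [Module (LaurentPolynomial ℤ) M]
    [AddCommGroup N] [Module (LaurentPolynomial ℤ) N]
    [Finite M] [Finite N] (hcard : Nat.card M = Nat.card N) :
    (∃ f : M → N, Function.Bijective f ∧
        ∀ a b : M,
          f ((T 1 : LaurentPolynomial ℤ) • a + ((1 : LaurentPolynomial ℤ) - T 1) • b)
            = (T 1 : LaurentPolynomial ℤ) • f a + ((1 : LaurentPolynomial ℤ) - T 1) • f b) ↔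
      Nonempty
        ((LinearMap.range (LinearMap.lsmul (LaurentPolynomial ℤ) M ((1 : LaurentPolynomial ℤ) - T 1)))
          ≃ₗ[LaurentPolynomial ℤ]
         (LinearMap.range (LinearMap.lsmul (LaurentPolynomial ℤ) N ((1 : LaurentPolynomial ℤ) - T 1)))) := by
  constructor
  · rintro ⟨f, hbij, hq⟩
    exact aux_forward f hbij hq
  · rintro ⟨e⟩
    exact aux_backward hcard e
end

section
/- If M and N are finite Alexander quandles and f : M → N is a quandle isomorphism with f(0) = 0, then f satisfies f(t·x) = t·f(x) and f((1−t)·y) = (1−t)·f(y) for all x, y ∈ M, and the restriction of f to the submodule (1−t)M is an isomorphism of Λ-modules from (1−t)M onto (1−t)N. -/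
open LaurentPolynomial

/-- If `M` and `N` are finite Alexander quandles and `f : M → N` is a quandle
isomorphism with `f 0 = 0`, then `f (t•x) = t•f x` and `f ((1-t)•y) = (1-t)•f y`
for all `x, y`, and the restriction of `f` to the submodule `(1-t)M` is an
isomorphism of `Λ = ℤ[t,t⁻¹]`-modules onto `(1-t)N`. -/
theorem quandle_iso_restricts_to_module_iso
    (M N : Type) [AddCommGroup M] [Module (LaurentPolynomial ℤ) M]
    [AddCommGroup N] [Module (LaurentPolynomial ℤ) N]
    [Finite M] [Finite N] (f : M → N) (hbij : Function.Bijective f)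
    (hq : ∀ a b : M,
      f ((T 1 : LaurentPolynomial ℤ) • a + ((1 : LaurentPolynomial ℤ) - T 1) • b)
        = (T 1 : LaurentPolynomial ℤ) • f a + ((1 : LaurentPolynomial ℤ) - T 1) • f b)
    (h0 : f 0 = 0) :
    (∀ x : M, f ((T 1 : LaurentPolynomial ℤ) • x) = (T 1 : LaurentPolynomial ℤ) • f x) ∧
    (∀ y : M, f (((1 : LaurentPolynomial ℤ) - T 1) • y)
        = ((1 : LaurentPolynomial ℤ) - T 1) • f y) ∧
    ∃ h : (LinearMap.range (LinearMap.lsmul (LaurentPolynomial ℤ) M ((1 : LaurentPolynomial ℤ) - T 1)))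
            ≃ₗ[LaurentPolynomial ℤ]
          (LinearMap.range (LinearMap.lsmul (LaurentPolynomial ℤ) N ((1 : LaurentPolynomial ℤ) - T 1))),
      ∀ x : LinearMap.range (LinearMap.lsmul (LaurentPolynomial ℤ) M ((1 : LaurentPolynomial ℤ) - T 1)),
        (h x : N) = f (x : M) := by
  set Λ := LaurentPolynomial ℤ
  set t : Λ := T 1 with ht_def
  have hinv : (T (-1) : Λ) * t = 1 := by rw [ht_def, ← T_add]; norm_num
  have hinv' : t * (T (-1) : Λ) = 1 := by rw [ht_def, ← T_add]; norm_num
  -- f commutes with t •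
  have ht : ∀ x : M, f (t • x) = t • f x := by
    intro x
    have := hq x 0
    simpa [h0] using this
  -- f commutes with (1 - t) •
  have hs : ∀ y : M, f ((1 - t) • y) = (1 - t) • f y := by
    intro y
    have := hq 0 y
    simpa [h0] using this
  refine ⟨ht, hs, ?_⟩
  -- f commutes with T (-1) •
  have htinv : ∀ x : M, f ((T (-1) : Λ) • x) = (T (-1) : Λ) • f x := by
    intro x
    have h1 : t • ((T (-1) : Λ) • x) = x := by rw [smul_smul, hinv', one_smul]
    have h2 : f x = t • f ((T (-1) : Λ) • x) := by rw [← ht, h1]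
    have : (T (-1) : Λ) • f x = f ((T (-1) : Λ) • x) := by
      rw [h2, smul_smul, hinv, one_smul]
    exact this.symm
  -- f commutes with T n • for all n : ℤ
  have hT : ∀ (n : ℤ) (x : M), f ((T n : Λ) • x) = (T n : Λ) • f x := by
    intro n
    induction n using Int.induction_on with
    | zero => intro x; simp [T_zero]
    | succ k ih =>
        intro x
        have e : (T ((k : ℤ) + 1) : Λ) = t * T k := by rw [ht_def, ← T_add, add_comm]
        rw [e, mul_smul, ht, ih, mul_smul]
    | pred k ih =>
        intro x
        have e : (T (-(k : ℤ) - 1) : Λ) = T (-1) * T (-(k:ℤ)) := by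
          rw [← T_add]; ring_nf
        rw [e, mul_smul, htinv, ih, mul_smul]
  set SM := LinearMap.range (LinearMap.lsmul Λ M ((1 : Λ) - t)) with hSM
  set SN := LinearMap.range (LinearMap.lsmul Λ N ((1 : Λ) - t)) with hSN
  have memSM : ∀ v : M, v ∈ SM ↔ ∃ b : M, (1 - t) • b = v := by
    intro v; simp [hSM, LinearMap.mem_range, sub_smul, one_smul]
  have memSN : ∀ v : N, v ∈ SN ↔ ∃ b : N, (1 - t) • b = v := by
    intro v; simp [hSN, LinearMap.mem_range, sub_smul, one_smul]
  -- key additivity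
  have hadd : ∀ (x v : M), v ∈ SM → f (x + v) = f x + f v := by
    intro x v hv
    obtain ⟨b, hb⟩ := (memSM v).mp hv
    have h1 : t • ((T (-1) : Λ) • x) = x := by rw [smul_smul, hinv', one_smul]
    have := hq ((T (-1) : Λ) • x) b
    rw [h1, htinv, smul_smul, hinv', one_smul] at this
    rw [← hb, this, hs]
  have hneg : ∀ v : M, v ∈ SM → f (-v) = - f v := by
    intro v hv
    have hmem : -v ∈ SM := neg_mem hv
    have := hadd v (-v) hmem
    rw [add_neg_cancel, h0] at this
    exact eq_neg_of_add_eq_zero_right this.symm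
  -- membership image
  have hmapsto : ∀ v : M, v ∈ SM → f v ∈ SN := by
    intro v hv
    obtain ⟨b, hb⟩ := (memSM v).mp hv
    exact (memSN _).mpr ⟨f b, by rw [← hb, hs]⟩
  -- zsmul
  have hz : ∀ (a : ℤ) (v : M), v ∈ SM → f (a • v) = a • f v := by
    intro a
    induction a using Int.induction_on with
    | zero => intro v hv; simp [h0]
    | succ k ih =>
        intro v hv
        have : ((k : ℤ) + 1) • v = (k : ℤ) • v + v := by rw [add_smul, one_smul]
        rw [this, hadd _ v hv, ih v hv, add_smul, one_smul]
    | pred k ih =>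
        intro v hv
        have : (-(k : ℤ) - 1) • v = (-(k : ℤ)) • v + (-v) := by
          rw [sub_smul, one_smul, sub_eq_add_neg]
        rw [this, hadd _ (-v) (neg_mem hv), ih v hv, hneg v hv, sub_smul, one_smul,
          sub_eq_add_neg]
  -- Λ-smul
  have hsmul : ∀ (c : Λ) (v : M), v ∈ SM → f (c • v) = c • f v := by
    intro c
    induction c using LaurentPolynomial.induction_on' with
    | add p q hp hq' =>
        intro v hv
        rw [add_smul, hadd _ (q • v) (SM.smul_mem q hv), hp v hv, hq' v hv, add_smul]
    | C_mul_T n a =>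
        intro v hv
        have hC : ∀ (P : Type) [inst : AddCommGroup P] [inst2 : Module Λ P] (y : P),
            (LaurentPolynomial.C a : Λ) • y = a • y := by
          intro P _ _ y
          rw [C_eq_algebraMap, algebraMap_smul]
        rw [mul_smul, hC M, mul_smul, hC N, ← hT n v,
          hz a _ ((memSM _).mpr (by
            obtain ⟨b, hb⟩ := (memSM v).mp hv
            exact ⟨(T n : Λ) • b, by rw [smul_comm, hb]⟩)),
          hT n v]
  -- construct the linear equivalence
  let g : SM →ₗ[Λ] SN :=
    { toFun := fun u => ⟨f u, hmapsto u u.2⟩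
      map_add' := by
        intro u v
        ext
        exact hadd u v v.2
      map_smul' := by
        intro c u
        ext
        exact hsmul c u u.2 }
  have hginj : Function.Injective g := by
    intro u v huv
    have : f u = f v := congrArg Subtype.val huv
    exact Subtype.ext (hbij.1 this)
  have hgsurj : Function.Surjective g := by
    rintro ⟨y, hy⟩
    obtain ⟨b, hb⟩ := (memSN y).mp hy
    obtain ⟨m, hm⟩ := hbij.2 b
    refine ⟨⟨(1 - t) • m, (memSM _).mpr ⟨m, rfl⟩⟩, ?_⟩
    ext
    show f ((1 - t) • m) = y
    rw [hs, hm, hb]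
  exact ⟨LinearEquiv.ofBijective g ⟨hginj, hgsurj⟩, fun x => rfl⟩
end

section
/- Let n ≥ 1 and let a, b be integers coprime to n. The linear Alexander quandles Λ_n/(t−a) and Λ_n/(t−b) are isomorphic as quandles if and only if N(n,a) = N(n,b) and a ≡ b (mod N(n,a)), where N(n,c) := n/gcd(n, 1−c). -/
namespace AQhelper


variable {n : ℕ}

lemma isUnit_intCast [NeZero n] {m : ℤ} (h : Int.gcd m n = 1) : IsUnit ((m : ZMod n)) := by
  obtain ⟨u, v, huv⟩ := Int.isCoprime_iff_gcd_eq_one.mpr h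
  apply IsUnit.of_mul_eq_one ((u : ZMod n))
  have : ((u * m + v * n : ℤ) : ZMod n) = 1 := by rw [huv]; simp
  push_cast at this
  rw [ZMod.natCast_self] at this
  linear_combination this

lemma gcd_val [NeZero n] (m : ℤ) : n.gcd ((m : ZMod n)).val = Int.gcd (n : ℤ) m := by
  have hv : (((m : ZMod n).val : ℕ) : ℤ) = m % n := ZMod.val_intCast m
  rw [← Int.gcd_natCast_natCast, hv]
  have hme : m % (n:ℤ) + n * (m / n) = m := Int.emod_add_mul_ediv m n
  apply Nat.dvd_antisymm
  · rw [← Int.natCast_dvd_natCast]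
    refine Int.dvd_coe_gcd ((Int.gcd_dvd_left _ _)) ?_
    calc ((Int.gcd (n:ℤ) (m % n) : ℕ) : ℤ) ∣ m % n + n * (m/n) :=
          dvd_add (Int.gcd_dvd_right _ _) (Dvd.dvd.mul_right (Int.gcd_dvd_left _ _) _)
      _ = m := hme
  · rw [← Int.natCast_dvd_natCast]
    refine Int.dvd_coe_gcd ((Int.gcd_dvd_left _ _)) ?_
    have : m % (n:ℤ) = m - n * (m / n) := by linarith
    rw [this]
    exact dvd_sub (Int.gcd_dvd_right _ _) (Dvd.dvd.mul_right (Int.gcd_dvd_left _ _) _)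

lemma range_mul_eq_zmultiples [NeZero n] (u : ZMod n) :
    (Set.range fun y : ZMod n => u * y) = (AddSubgroup.zmultiples u : Set (ZMod n)) := by
  ext z
  simp only [Set.mem_range, SetLike.mem_coe, AddSubgroup.mem_zmultiples_iff]
  constructor
  · rintro ⟨y, rfl⟩
    exact ⟨(y.val : ℤ), by push_cast [zsmul_eq_mul]; rw [ZMod.natCast_rightInverse y]; ring⟩
  · rintro ⟨k, rfl⟩
    exact ⟨(k : ZMod n), by rw [zsmul_eq_mul]; ring⟩

lemma card_range_mul [NeZero n] (u : ZMod n) :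
    Nat.card (Set.range fun y : ZMod n => u * y) = n / n.gcd u.val := by
  rw [range_mul_eq_zmultiples]
  have h1 : Nat.card (AddSubgroup.zmultiples u : Set (ZMod n)) = Nat.card (AddSubgroup.zmultiples u) := rfl
  rw [h1, Nat.card_zmultiples]
  conv_lhs => rw [← ZMod.natCast_rightInverse u]
  exact ZMod.addOrderOf_coe u.val (NeZero.ne n)

lemma gcd_dvd_of_mul [NeZero n] (u v k : ZMod n) (h : u = v * k) :
    n.gcd v.val ∣ n.gcd u.val := by
  refine Nat.dvd_gcd (Nat.gcd_dvd_left _ _) ?_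
  have : u.val = v.val * k.val % n := by rw [h, ZMod.val_mul]
  rw [this, Nat.dvd_mod_iff (Nat.gcd_dvd_left _ _)]
  exact Dvd.dvd.mul_right (Nat.gcd_dvd_right _ _) _

lemma forward (n : ℕ) [NeZero n] (a b : ℤ) (hb : Int.gcd b n = 1)
    (f : ZMod n → ZMod n) (hf : Function.Bijective f)
    (hom : ∀ x y : ZMod n, f ((a : ZMod n) * x + ((1 - a : ℤ) : ZMod n) * y)
      = (b : ZMod n) * f x + ((1 - b : ℤ) : ZMod n) * f y) :
    n / Int.gcd (n : ℤ) (1 - a) = n / Int.gcd (n : ℤ) (1 - b) ∧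
      ((n / Int.gcd (n : ℤ) (1 - b) : ℕ) : ℤ) ∣ a - b := by
  set A : ZMod n := ((a : ℤ) : ZMod n) with hA_def
  set B : ZMod n := ((b : ℤ) : ZMod n) with hB_def
  have hcast1 : ((1 - a : ℤ) : ZMod n) = 1 - A := by push_cast; ring
  have hcast2 : ((1 - b : ℤ) : ZMod n) = 1 - B := by push_cast; ring
  rw [hcast1, hcast2] at hom
  have hBu : IsUnit B := isUnit_intCast hb
  -- normalize
  set g : ZMod n → ZMod n := fun x => f x - f 0 with hg_def
  have hg : Function.Bijective g := by
    have : g = (fun t => t - f 0) ∘ f := rfl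
    rw [this]
    exact (Equiv.subRight (f 0)).bijective.comp hf
  have hg0 : g 0 = 0 := sub_self _
  have hgh : ∀ x y : ZMod n, g (A * x + (1 - A) * y) = B * g x + (1 - B) * g y := by
    intro x y
    have h := hom x y
    simp only [hg_def]
    linear_combination h
  -- (†)
  have hdag : ∀ w z : ZMod n, g (w + A * z) = B * g (w + z) + (1 - B) * g w := by
    intro w z
    have h := hgh (w + z) w
    have harg : A * (w + z) + (1 - A) * w = w + A * z := by ring
    rwa [harg] at h
  -- key identity
  have key : ∀ x y w : ZMod n,
      B * (g (A * y + w) - g (y + w)) = B * ((1 - B) * (g x - g (x + y))) := by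
    intro x y w
    have e1 := hdag (x + A * y) (w - x)
    have e2 := hdag x (y + (w - x))
    have e3 := hdag x y
    have a1 : x + A * y + A * (w - x) = x + A * (y + (w - x)) := by ring
    have a2 : x + A * y + (w - x) = A * y + w := by ring
    have a3 : x + (y + (w - x)) = y + w := by ring
    rw [a1, a2] at e1
    rw [a3] at e2
    linear_combination (-1 : ZMod n) * e1 + e2 - (1 - B) * e3
  -- additivity of (1-B) * g
  have hadd : ∀ x y : ZMod n, (1 - B) * g (x + y) = (1 - B) * g x + (1 - B) * g y := by
    intro x y
    have k1 := key x y 0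
    have k2 := key 0 y 0
    have h := k1.symm.trans k2
    have h' := hBu.mul_left_cancel h
    rw [hg0, zero_add] at h'
    linear_combination (-1 : ZMod n) * h'
  set c : ZMod n := (1 - B) * g 1 with hc_def
  have hc : ∀ x : ZMod n, (1 - B) * g x = c * x := by
    intro x
    let G : ZMod n →+ ZMod n :=
      { toFun := fun x => (1 - B) * g x
        map_zero' := by show (1 - B) * g 0 = 0; rw [hg0, mul_zero]
        map_add' := hadd }
    have h1 : ((x.val : ℕ) : ZMod n) = x := ZMod.natCast_rightInverse x
    calc (1 - B) * g x = G x := rfl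
      _ = G (x.val • (1 : ZMod n)) := by rw [nsmul_eq_mul, mul_one, h1]
      _ = x.val • G 1 := map_nsmul G x.val 1
      _ = ((x.val : ℕ) : ZMod n) * G 1 := by rw [nsmul_eq_mul]
      _ = c * x := by rw [h1]; show x * ((1-B) * g 1) = c * x; rw [← hc_def]; ring
  have hA1 : ∀ y : ZMod n, g ((1 - A) * y) = c * y := by
    intro y
    have h := hgh 0 y
    rw [mul_zero, zero_add, hg0, mul_zero, zero_add] at h
    exact h.trans (hc y)
  have hAmul : g A = B * g 1 := by
    have h := hgh 1 0
    rw [mul_zero, add_zero, mul_one, hg0, mul_zero, add_zero] at h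
    exact h
  have habc : (A - B) * c = 0 := by
    have h : c * A = B * c := by
      calc c * A = (1 - B) * g A := (hc A).symm
        _ = (1 - B) * (B * g 1) := by rw [hAmul]
        _ = B * c := by rw [hc_def]; ring
    linear_combination h
  -- gcd c = gcd (1 - B)
  have hgcd_cB : n.gcd c.val = n.gcd (1 - B).val := by
    apply Nat.dvd_antisymm
    · obtain ⟨x, hx⟩ := hg.surjective 1
      have : (1 - B) = c * x := by rw [← hc x, hx, mul_one]
      exact gcd_dvd_of_mul (1 - B) c x this
    · exact gcd_dvd_of_mul c (1 - B) (g 1) hc_def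
  -- cardinality: gcd (1-A) and gcd c give same N
  have himg : g '' (Set.range fun y : ZMod n => (1 - A) * y)
      = Set.range fun y : ZMod n => c * y := by
    rw [← Set.range_comp]
    apply congrArg Set.range
    funext y
    exact hA1 y
  have hcard : n / n.gcd (1 - A).val = n / n.gcd c.val := by
    rw [← card_range_mul, ← card_range_mul, ← himg,
      Nat.card_image_of_injective hg.injective]
  have hval1 : n.gcd (1 - A).val = Int.gcd (n : ℤ) (1 - a) := by
    rw [← hcast1]; exact gcd_val (1 - a)
  have hval2 : n.gcd (1 - B).val = Int.gcd (n : ℤ) (1 - b) := by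
    rw [← hcast2]; exact gcd_val (1 - b)
  have hgoal1 : n / Int.gcd (n : ℤ) (1 - a) = n / Int.gcd (n : ℤ) (1 - b) := by
    rw [← hval1, ← hval2, ← hgcd_cB]; exact hcard
  refine ⟨hgoal1, ?_⟩
  -- divisibility
  have hdvd : (n : ℤ) ∣ (a - b) * (c.val : ℤ) := by
    rw [← ZMod.intCast_zmod_eq_zero_iff_dvd]
    push_cast
    have h1 : ((c.val : ℕ) : ZMod n) = c := ZMod.natCast_rightInverse c
    rw [h1]
    calc ((a : ZMod n) - (b : ZMod n)) * c = (A - B) * c := by rw [hA_def, hB_def]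
      _ = 0 := habc
  set dc : ℕ := n.gcd c.val with hdc_def
  have hdc_pos : 0 < dc := Nat.gcd_pos_of_pos_left _ (Nat.pos_of_ne_zero (NeZero.ne n))
  have hn_eq : n = dc * (n / dc) := (Nat.mul_div_cancel' (Nat.gcd_dvd_left _ _)).symm
  have hcval_eq : c.val = dc * (c.val / dc) := (Nat.mul_div_cancel' (Nat.gcd_dvd_right _ _)).symm
  have hco : Nat.Coprime (n / dc) (c.val / dc) := Nat.coprime_div_gcd_div_gcd hdc_pos
  have hdvd2 : ((n / dc : ℕ) : ℤ) ∣ (a - b) * ((c.val / dc : ℕ) : ℤ) := by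
    have h2 : ((dc : ℕ) : ℤ) * ((n / dc : ℕ) : ℤ) ∣ ((dc : ℕ) : ℤ) * ((a - b) * ((c.val / dc : ℕ) : ℤ)) := by
      have hh : ((dc : ℕ) : ℤ) * ((a - b) * ((c.val / dc : ℕ) : ℤ))
          = (a - b) * (((dc * (c.val / dc) : ℕ)) : ℤ) := by push_cast; ring
      rw [hh, ← hcval_eq, ← Nat.cast_mul, ← hn_eq]
      exact hdvd
    exact (mul_dvd_mul_iff_left (by exact_mod_cast hdc_pos.ne' : ((dc : ℕ) : ℤ) ≠ 0)).mp h2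
  have hco' : IsCoprime ((n / dc : ℕ) : ℤ) ((c.val / dc : ℕ) : ℤ) := by
    rw [Int.isCoprime_iff_gcd_eq_one, Int.gcd_natCast_natCast]
    exact hco
  have hfinal : ((n / dc : ℕ) : ℤ) ∣ a - b := hco'.dvd_of_dvd_mul_right hdvd2
  have : n / Int.gcd (n : ℤ) (1 - b) = n / dc := by rw [← hval2, hgcd_cB]
  rw [this]
  exact hfinal

lemma backward (n : ℕ) [NeZero n] (a b : ℤ)
    (h1 : n / Int.gcd (n : ℤ) (1 - a) = n / Int.gcd (n : ℤ) (1 - b))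
    (h2 : ((n / Int.gcd (n : ℤ) (1 - a) : ℕ) : ℤ) ∣ b - a) :
    ∃ f : ZMod n → ZMod n, Function.Bijective f ∧
      ∀ x y : ZMod n,
        f ((a : ZMod n) * x + ((1 - a : ℤ) : ZMod n) * y)
          = (b : ZMod n) * f x + ((1 - b : ℤ) : ZMod n) * f y := by
  have hn0 : n ≠ 0 := NeZero.ne n
  set d : ℕ := Int.gcd (n : ℤ) (1 - a) with hd_def
  have hd_dvd_n : d ∣ n := Int.natCast_dvd_natCast.mp (Int.gcd_dvd_left _ _)
  have hdb_dvd_n : (Int.gcd (n : ℤ) (1 - b)) ∣ n := Int.natCast_dvd_natCast.mp (Int.gcd_dvd_left _ _)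
  have hdb : Int.gcd (n : ℤ) (1 - b) = d := by
    rw [← Nat.div_div_self hdb_dvd_n hn0, ← h1, hd_def, Nat.div_div_self hd_dvd_n hn0]
  have hd_pos : 0 < d := by
    rw [hd_def]
    exact Int.gcd_pos_iff.mpr (Or.inl (by exact_mod_cast hn0))
  haveI : NeZero d := ⟨hd_pos.ne'⟩
  set N : ℕ := n / d with hN_def
  have hdN : d * N = n := Nat.mul_div_cancel' hd_dvd_n
  have hnZ : ((n : ℕ) : ℤ) = (d : ℤ) * (N : ℤ) := by exact_mod_cast hdN.symm
  have hN_dvd : N ∣ n := ⟨d, by rw [← hdN]; ring⟩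
  have hN_pos : 0 < N := Nat.pos_of_ne_zero fun h0 => hn0 (by rw [← hdN, h0, mul_zero])
  haveI : NeZero N := ⟨hN_pos.ne'⟩
  -- s, s'
  have hs_dvd : (d : ℤ) ∣ 1 - a := (Int.gcd_dvd_right _ _)
  have hs'_dvd : (d : ℤ) ∣ 1 - b := hdb ▸ ((Int.gcd_dvd_right _ _) : ((Int.gcd (n:ℤ) (1-b) : ℕ) : ℤ) ∣ 1 - b)
  set s : ℤ := (1 - a) / (d : ℤ) with hs_def
  set s' : ℤ := (1 - b) / (d : ℤ) with hs'_def
  have hs : 1 - a = (d : ℤ) * s := (Int.mul_ediv_cancel' hs_dvd).symm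
  have hs' : 1 - b = (d : ℤ) * s' := (Int.mul_ediv_cancel' hs'_dvd).symm
  have hgcdNs : Int.gcd (N : ℤ) s = 1 := by
    have h := hd_def
    rw [hnZ, hs, Int.gcd_mul_left] at h
    simp only [Int.natAbs_natCast] at h
    have h' : d * Int.gcd ((N : ℕ) : ℤ) s = d * 1 := by rw [mul_one]; exact h.symm
    exact Nat.eq_of_mul_eq_mul_left hd_pos h'
  have hgcdNs' : Int.gcd (N : ℤ) s' = 1 := by
    have h := hdb.symm
    rw [hnZ, hs', Int.gcd_mul_left] at h
    simp only [Int.natAbs_natCast] at h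
    have h' : d * Int.gcd ((N : ℕ) : ℤ) s' = d * 1 := by rw [mul_one]; exact h.symm
    exact Nat.eq_of_mul_eq_mul_left hd_pos h'
  -- units mod N
  have hus : IsUnit ((s : ZMod N)) := isUnit_intCast (by rw [Int.gcd_comm]; exact hgcdNs)
  have hus' : IsUnit ((s' : ZMod N)) := isUnit_intCast (by rw [Int.gcd_comm]; exact hgcdNs')
  set u : (ZMod N)ˣ := hus'.unit⁻¹ * hus.unit with hu_def
  have hu_spec : ((s' : ZMod N)) * (u : ZMod N) = (s : ZMod N) := by
    have h1 : ((s' : ZMod N)) = (hus'.unit : ZMod N) := (IsUnit.unit_spec hus').symm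
    rw [h1, hu_def, ← Units.val_mul, mul_inv_cancel_left]
    exact IsUnit.unit_spec hus
  obtain ⟨U, hU⟩ := ZMod.unitsMap_surjective hN_dvd u
  set β : ℤ := (((U : ZMod n)).val : ℤ) with hβ_def
  have hβn : ((β : ℤ) : ZMod n) = (U : ZMod n) := by
    rw [hβ_def, Int.cast_natCast]
    exact ZMod.natCast_rightInverse _
  have hβgcd : Int.gcd β n = 1 := by
    rw [hβ_def, Int.gcd_natCast_natCast]
    exact ZMod.val_coe_unit_coprime U
  have hβN : ((β : ℤ) : ZMod N) = (u : ZMod N) := by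
    rw [← hU, hβ_def, Int.cast_natCast]
    have h1 : (((U : ZMod n).val : ℕ) : ZMod N) = ZMod.cast (U : ZMod n) := ZMod.natCast_val _
    rw [h1, ZMod.unitsMap_def]
    rfl
  -- key congruence
  have hkeyZ : (n : ℤ) ∣ (1 - b) * β - (1 - a) := by
    have hNdvd : (N : ℤ) ∣ s' * β - s := by
      rw [← ZMod.intCast_zmod_eq_zero_iff_dvd]
      push_cast
      rw [hβN, hu_spec]
      ring
    obtain ⟨k, hk⟩ := hNdvd
    refine ⟨k, ?_⟩
    rw [hs, hs', hnZ]
    linear_combination (d : ℤ) * hk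
  have hkey : ((1 - b : ℤ) : ZMod n) * ((β : ℤ) : ZMod n) = ((1 - a : ℤ) : ZMod n) := by
    have h0 : (((1 - b) * β - (1 - a) : ℤ) : ZMod n) = 0 :=
      (ZMod.intCast_zmod_eq_zero_iff_dvd _ n).mpr hkeyZ
    push_cast at h0 ⊢
    linear_combination h0
  -- reduction map and remainder function
  let π : ZMod n →+* ZMod d := ZMod.castHom hd_dvd_n (ZMod d)
  let r : ZMod n → ZMod n := fun x => (((π x).val : ℕ) : ZMod n)
  have hrapp : ∀ z : ZMod n, r z = (((π z).val : ℕ) : ZMod n) := fun _ => rfl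
  have hπd : π (((d : ℕ) : ZMod n)) = 0 := by
    rw [map_natCast, ZMod.natCast_self]
  have hπr : ∀ z : ZMod n, π (r z) = π z := by
    intro z
    rw [hrapp, map_natCast]
    exact ZMod.natCast_rightInverse _
  have hF2 : ∀ x : ZMod n, ∃ q : ZMod n, x = r x + ((d : ℕ) : ZMod n) * q := by
    intro x
    refine ⟨((x.val / d : ℕ) : ZMod n), ?_⟩
    have hval : (π x).val = x.val % d := by
      show ((ZMod.castHom hd_dvd_n (ZMod d)) x).val = x.val % d
      rw [ZMod.castHom_apply, ← ZMod.natCast_val, ZMod.val_natCast]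
    rw [hrapp, hval]
    have hmd : x.val % d + d * (x.val / d) = x.val := Nat.mod_add_div _ _
    calc x = ((x.val : ℕ) : ZMod n) := (ZMod.natCast_rightInverse x).symm
      _ = ((x.val % d + d * (x.val / d) : ℕ) : ZMod n) := by rw [hmd]
      _ = ((x.val % d : ℕ) : ZMod n) + ((d : ℕ) : ZMod n) * ((x.val / d : ℕ) : ZMod n) := by
          push_cast; ring
  -- coefficient facts
  have hdcast : ((1 - a : ℤ) : ZMod n) = ((d : ℕ) : ZMod n) * ((s : ℤ) : ZMod n) := by
    rw [hs]; push_cast; ring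
  have hF4 : ((a : ZMod n) - (b : ZMod n)) * ((d : ℕ) : ZMod n) = 0 := by
    obtain ⟨k, hk⟩ := h2
    have hab : ((a - b) * (d : ℤ) : ℤ) = (-k) * (n : ℤ) := by
      rw [hnZ]
      linear_combination (-(d : ℤ)) * hk
    calc ((a : ZMod n) - (b : ZMod n)) * ((d : ℕ) : ZMod n)
        = (((a - b) * (d : ℤ) : ℤ) : ZMod n) := by push_cast; ring
      _ = (((-k) * (n : ℤ) : ℤ) : ZMod n) := by rw [hab]
      _ = 0 := by push_cast; simp [ZMod.natCast_self]
  have hF5 : ((1 - b : ℤ) : ZMod n) * (1 - ((β : ℤ) : ZMod n)) = (a : ZMod n) - (b : ZMod n) := by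
    push_cast at hkey ⊢
    linear_combination -hkey
  -- the map
  let f : ZMod n → ZMod n := fun x => x - (1 - ((β : ℤ) : ZMod n)) * r x
  have hfapp : ∀ z : ZMod n, f z = z - (1 - ((β : ℤ) : ZMod n)) * r z := fun _ => rfl
  have hrx_eq : ∀ x y : ZMod n,
      r ((a : ZMod n) * x + ((1 - a : ℤ) : ZMod n) * y) = r x := by
    intro x y
    have harg : (a : ZMod n) * x + ((1 - a : ℤ) : ZMod n) * y
        = x + ((d : ℕ) : ZMod n) * (((s : ℤ) : ZMod n) * (y - x)) := by
      have hA : (a : ZMod n) = 1 - ((d : ℕ) : ZMod n) * ((s : ℤ) : ZMod n) := by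
        rw [← hdcast]; push_cast; ring
      rw [hA, hdcast]; ring
    have hπeq : π ((a : ZMod n) * x + ((1 - a : ℤ) : ZMod n) * y) = π x := by
      rw [harg, map_add, map_mul, hπd, zero_mul, add_zero]
    rw [hrapp, hrapp, hπeq]
  -- injectivity
  have hβd_gcd : Int.gcd β d = 1 := by
    have hdvd1 : ((Int.gcd β d : ℕ) : ℤ) ∣ ((Int.gcd β n : ℕ) : ℤ) := by
      apply Int.dvd_coe_gcd (Int.gcd_dvd_left _ _)
      exact (Int.gcd_dvd_right _ _).trans (by exact_mod_cast hd_dvd_n)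
    rw [hβgcd] at hdvd1
    exact Nat.eq_one_of_dvd_one (by exact_mod_cast hdvd1)
  have hβdu : IsUnit ((β : ℤ) : ZMod d) := isUnit_intCast hβd_gcd
  have hinj : Function.Injective f := by
    intro x y hxy
    have hxy' : x - (1 - ((β : ℤ) : ZMod n)) * r x = y - (1 - ((β : ℤ) : ZMod n)) * r y := hxy
    have hπxy : π x = π y := by
      have h := congrArg π hxy'
      simp only [map_sub, map_mul, map_one, map_intCast, hπr] at h
      have h' : ((β : ℤ) : ZMod d) * π x = ((β : ℤ) : ZMod d) * π y := by
        linear_combination h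
      exact hβdu.mul_left_cancel h'
    have hrxy : r x = r y := by rw [hrapp, hrapp, hπxy]
    rw [hrxy] at hxy'
    linear_combination hxy'
  refine ⟨f, Finite.injective_iff_bijective.mp hinj, ?_⟩
  intro x y
  obtain ⟨qx, hqx⟩ := hF2 x
  obtain ⟨qy, hqy⟩ := hF2 y
  have hfz : f ((a : ZMod n) * x + ((1 - a : ℤ) : ZMod n) * y)
      = (a : ZMod n) * x + ((1 - a : ℤ) : ZMod n) * y - (1 - ((β : ℤ) : ZMod n)) * r x := by
    rw [hfapp, hrx_eq x y]
  rw [hfz, hfapp x, hfapp y]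
  push_cast at hF5 hF4 hqx hqy ⊢
  linear_combination (r y - r x) * hF5 + ((a : ZMod n) - (b : ZMod n)) * hqx
    - ((a : ZMod n) - (b : ZMod n)) * hqy + (qx - qy) * hF4

end AQhelper

/-- Let `n ≥ 1` and let `a, b` be integers coprime to `n`.  The linear Alexander
quandles `Λₙ/(t-a)` and `Λₙ/(t-b)` (namely `ZMod n` with quandle operation
`x ^ y = a*x + (1-a)*y`, resp. with `b`) are isomorphic as quandles iff
`N(n,a) = N(n,b)` and `a ≡ b (mod N(n,a))`, where `N(n,c) = n / gcd(n, 1-c)`. -/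
theorem linear_alexander_quandles_iso_iff
    (n : ℕ) (hn : 1 ≤ n) (a b : ℤ)
    (ha : Int.gcd a n = 1) (hb : Int.gcd b n = 1) :
    (∃ f : ZMod n → ZMod n, Function.Bijective f ∧
        ∀ x y : ZMod n,
          f ((a : ZMod n) * x + ((1 - a : ℤ) : ZMod n) * y)
            = (b : ZMod n) * f x + ((1 - b : ℤ) : ZMod n) * f y) ↔
      (n / Int.gcd (n : ℤ) (1 - a) = n / Int.gcd (n : ℤ) (1 - b) ∧
        a ≡ b [ZMOD ((n / Int.gcd (n : ℤ) (1 - a) : ℕ) : ℤ)]) := by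
  haveI : NeZero n := ⟨by omega⟩
  constructor
  · rintro ⟨f, hbij, hom⟩
    obtain ⟨h1, h2⟩ := AQhelper.forward n a b hb f hbij hom
    refine ⟨h1, ?_⟩
    have h3 : ((n / Int.gcd (n : ℤ) (1 - a) : ℕ) : ℤ) ∣ b - a := by
      rw [h1, show b - a = -(a - b) by ring]
      exact dvd_neg.mpr h2
    exact Int.modEq_iff_dvd.mpr h3
  · rintro ⟨h1, h2⟩
    exact AQhelper.backward n a b h1 (Int.ModEq.dvd h2)
end

section
/- Two finite connected Alexander quandles are isomorphic as quandles if and only if they are isomorphic as Λ-modules. More precisely, if M and N are finite connected Alexander quandles and f : M → N is a quandle isomorphism with f(0) = 0, then f is an isomorphism of Λ-modules. -/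
open LaurentPolynomial

section Aux

variable {M N : Type} [AddCommGroup M] [Module (LaurentPolynomial ℤ) M]
    [AddCommGroup N] [Module (LaurentPolynomial ℤ) N]

private lemma aux_linear
    (hMconn : ∀ y : M, ∃ x : M, ((1 : LaurentPolynomial ℤ) - T 1) • x = y)
    (f : M → N) (hbij : Function.Bijective f)
    (hq : ∀ a b : M,
        f ((T 1 : LaurentPolynomial ℤ) • a + ((1 : LaurentPolynomial ℤ) - T 1) • b)
          = (T 1 : LaurentPolynomial ℤ) • f a + ((1 : LaurentPolynomial ℤ) - T 1) • f b)
    (h0 : f 0 = 0) :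
    ∃ g : M ≃ₗ[LaurentPolynomial ℤ] N, ∀ x : M, g x = f x := by
  have hT : ∀ a : M, f ((T 1 : LaurentPolynomial ℤ) • a) = (T 1 : LaurentPolynomial ℤ) • f a := by
    intro a
    have := hq a 0
    simpa [h0] using this
  have hS : ∀ b : M, f (((1 : LaurentPolynomial ℤ) - T 1) • b)
      = ((1 : LaurentPolynomial ℤ) - T 1) • f b := by
    intro b
    have := hq 0 b
    simpa [h0] using this
  have hu : ∀ u : M, (T 1 : LaurentPolynomial ℤ) • ((T (-1) : LaurentPolynomial ℤ) • u) = u := by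
    intro u
    rw [smul_smul, ← T_add]
    norm_num
  have hadd : ∀ u v : M, f (u + v) = f u + f v := by
    intro u v
    obtain ⟨b, hb⟩ := hMconn v
    calc f (u + v)
        = f ((T 1 : LaurentPolynomial ℤ) • ((T (-1) : LaurentPolynomial ℤ) • u)
            + ((1 : LaurentPolynomial ℤ) - T 1) • b) := by rw [hu, hb]
      _ = (T 1 : LaurentPolynomial ℤ) • f ((T (-1) : LaurentPolynomial ℤ) • u)
            + ((1 : LaurentPolynomial ℤ) - T 1) • f b := hq _ _
      _ = f ((T 1 : LaurentPolynomial ℤ) • ((T (-1) : LaurentPolynomial ℤ) • u))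
            + f (((1 : LaurentPolynomial ℤ) - T 1) • b) := by rw [hT, hS]
      _ = f u + f v := by rw [hu, hb]
  let F : M →+ N := AddMonoidHom.mk' f hadd
  have hFf : ∀ x : M, F x = f x := fun _ => rfl
  have hTn : ∀ (n : ℤ) (a : M), f ((T n : LaurentPolynomial ℤ) • a)
      = (T n : LaurentPolynomial ℤ) • f a := by
    intro n
    induction n using Int.induction_on with
    | zero => simp [T_zero]
    | succ n ih =>
        intro a
        have h1 : (T (n + 1 : ℤ) : LaurentPolynomial ℤ) • a
            = (T 1 : LaurentPolynomial ℤ) • ((T (n : ℤ) : LaurentPolynomial ℤ) • a) := by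
          rw [smul_smul, ← T_add, add_comm]
        have h2 : (T (n + 1 : ℤ) : LaurentPolynomial ℤ) • f a
            = (T 1 : LaurentPolynomial ℤ) • ((T (n : ℤ) : LaurentPolynomial ℤ) • f a) := by
          rw [smul_smul, ← T_add, add_comm]
        rw [h1, hT, ih, h2]
    | pred n ih =>
        intro a
        have key : (T 1 : LaurentPolynomial ℤ) • f ((T (-n - 1 : ℤ) : LaurentPolynomial ℤ) • a)
            = (T 1 : LaurentPolynomial ℤ) • ((T (-n - 1 : ℤ) : LaurentPolynomial ℤ) • f a) := by
          rw [← hT, smul_smul, ← T_add, smul_smul, ← T_add]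
          have : (1 + (-n - 1) : ℤ) = -n := by ring
          rw [this, ih]
        have hrec : ∀ y : N, (T (-1) : LaurentPolynomial ℤ) • ((T 1 : LaurentPolynomial ℤ) • y) = y := by
          intro y
          rw [smul_smul, ← T_add]
          norm_num
        have hinj : Function.Injective
            (fun y : N => (T 1 : LaurentPolynomial ℤ) • y) := by
          intro x y hxy
          have := congrArg (fun z => (T (-1) : LaurentPolynomial ℤ) • z) hxy
          simpa only [hrec] using this
        have := hinj key
        simpa [show (-(n : ℤ) - 1) = (-(n + 1 : ℤ)) by ring] using this
  have hsmul : ∀ (p : LaurentPolynomial ℤ) (a : M), f (p • a) = p • f a := by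
    intro p
    induction p using LaurentPolynomial.induction_on' with
    | add p q hp hq' =>
        intro a
        rw [add_smul, hadd, hp, hq', ← add_smul]
    | C_mul_T n c =>
        intro a
        have hC : (LaurentPolynomial.C c : LaurentPolynomial ℤ) = (c : LaurentPolynomial ℤ) :=
          eq_intCast (LaurentPolynomial.C : ℤ →+* LaurentPolynomial ℤ) c
        rw [mul_smul, mul_smul, hC, Int.cast_smul_eq_zsmul, Int.cast_smul_eq_zsmul,
          ← hFf, ← hFf, map_zsmul, hFf, hFf, hTn]
  refine ⟨LinearEquiv.ofBijective
    (⟨⟨f, fun x y => hadd x y⟩, fun p a => hsmul p a⟩ : M →ₗ[LaurentPolynomial ℤ] N) hbij, fun x => rfl⟩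

end Aux

/-- Two finite connected Alexander quandles are isomorphic as quandles iff they
are isomorphic as `Λ = ℤ[t,t⁻¹]`-modules.  More precisely, if `M` and `N` are
finite connected Alexander quandles (`(1-t)M = M`, `(1-t)N = N`) and
`f : M → N` is a quandle isomorphism with `f 0 = 0`, then `f` is an
isomorphism of `Λ`-modules. -/
theorem connected_alexander_quandles_iso_iff_module_iso
    (M N : Type) [AddCommGroup M] [Module (LaurentPolynomial ℤ) M]
    [AddCommGroup N] [Module (LaurentPolynomial ℤ) N]
    [Finite M] [Finite N]
    (hMconn : ∀ y : M, ∃ x : M, ((1 : LaurentPolynomial ℤ) - T 1) • x = y)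
    (hNconn : ∀ y : N, ∃ x : N, ((1 : LaurentPolynomial ℤ) - T 1) • x = y) :
    ((∃ f : M → N, Function.Bijective f ∧
        ∀ a b : M,
          f ((T 1 : LaurentPolynomial ℤ) • a + ((1 : LaurentPolynomial ℤ) - T 1) • b)
            = (T 1 : LaurentPolynomial ℤ) • f a + ((1 : LaurentPolynomial ℤ) - T 1) • f b) ↔
      Nonempty (M ≃ₗ[LaurentPolynomial ℤ] N)) ∧
    (∀ f : M → N, Function.Bijective f →
      (∀ a b : M,
        f ((T 1 : LaurentPolynomial ℤ) • a + ((1 : LaurentPolynomial ℤ) - T 1) • b)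
          = (T 1 : LaurentPolynomial ℤ) • f a + ((1 : LaurentPolynomial ℤ) - T 1) • f b) →
      f 0 = 0 →
      ∃ g : M ≃ₗ[LaurentPolynomial ℤ] N, ∀ x : M, g x = f x) := by
  constructor
  · constructor
    · rintro ⟨f, hbij, hq⟩
      set f' : M → N := fun x => f x - f 0 with hf'
      have hbij' : Function.Bijective f' := by
        have : f' = (fun y : N => y - f 0) ∘ f := rfl
        rw [this]
        exact (Equiv.subRight (f 0)).bijective.comp hbij
      have hq' : ∀ a b : M,
          f' ((T 1 : LaurentPolynomial ℤ) • a + ((1 : LaurentPolynomial ℤ) - T 1) • b)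
            = (T 1 : LaurentPolynomial ℤ) • f' a + ((1 : LaurentPolynomial ℤ) - T 1) • f' b := by
        intro a b
        show f ((T 1 : LaurentPolynomial ℤ) • a + ((1 : LaurentPolynomial ℤ) - T 1) • b) - f 0
            = (T 1 : LaurentPolynomial ℤ) • (f a - f 0)
              + ((1 : LaurentPolynomial ℤ) - T 1) • (f b - f 0)
        rw [hq, smul_sub, smul_sub, sub_smul, sub_smul, one_smul, one_smul]
        abel
      obtain ⟨g, _⟩ := aux_linear hMconn f' hbij' hq' (by simp [hf'])
      exact ⟨g⟩
    · rintro ⟨e⟩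
      exact ⟨e, e.bijective, fun a b => by simp⟩
  · intro f hbij hq h0
    exact aux_linear hMconn f hbij hq h0
end

section
/- Let n ≥ 1 and let a, b be integers coprime to n. The linear Alexander quandle Λ_n/(t−a) is dual to Λ_n/(t−b) (i.e., Λ_n/(t−b) is isomorphic as a quandle to the dual quandle of Λ_n/(t−a)) if and only if N(n,a) = N(n,b) and a·b ≡ 1 (mod N(n,a)), where N(n,c) := n/gcd(n, 1−c). -/
lemma gcd_cast_eq {n : ℕ} {x y : ℤ} (h : (x : ZMod n) = (y : ZMod n)) :
    Int.gcd (n : ℤ) x = Int.gcd (n : ℤ) y := by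
  have hd : (n:ℤ) ∣ y - x := (ZMod.intCast_eq_intCast_iff _ _ _).mp h |>.dvd
  obtain ⟨k, hk⟩ := hd
  have hy : y = x + n * k := by linarith
  subst hy
  apply Nat.dvd_antisymm
  · exact Int.natCast_dvd_natCast.mp <| Int.dvd_coe_gcd (Int.gcd_dvd_left _ _)
      (dvd_add (Int.gcd_dvd_right (n:ℤ) x) (Dvd.dvd.mul_right (Int.gcd_dvd_left (n:ℤ) x) k))
  · refine Int.natCast_dvd_natCast.mp <| Int.dvd_coe_gcd (Int.gcd_dvd_left (n:ℤ) (x + n*k)) ?_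
    have h1 : (Int.gcd (n:ℤ) (x + n*k) : ℤ) ∣ x + n * k := (Int.gcd_dvd_right _ _)
    have h2 : (Int.gcd (n:ℤ) (x + n*k) : ℤ) ∣ n * k := Dvd.dvd.mul_right (Int.gcd_dvd_left (n:ℤ) (x + n*k)) k
    simpa using dvd_sub h1 h2

lemma gcd_unit_mul {n : ℕ} {k m : ℤ} (hk : Int.gcd k (n:ℤ) = 1) :
    Int.gcd (n:ℤ) (k * m) = Int.gcd (n:ℤ) m := by
  rw [Int.gcd, Int.gcd, Int.natAbs_mul]
  rw [Int.gcd] at hk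
  exact Nat.Coprime.gcd_mul_left_cancel_right _ hk

lemma Ndvd_of_dvd_mul {n : ℕ} (hn : 0 < n) {x m : ℤ} (h : (n:ℤ) ∣ x * m) :
    ((n / Int.gcd (n:ℤ) x : ℕ) : ℤ) ∣ m := by
  set d : ℕ := Int.gcd (n:ℤ) x with hd
  have hd0 : 0 < d := Int.gcd_pos_of_ne_zero_left x (by exact_mod_cast hn.ne')
  have hdn : (d:ℤ) ∣ (n:ℤ) := (Int.gcd_dvd_left _ _)
  have hdx : (d:ℤ) ∣ x := (Int.gcd_dvd_right _ _)
  obtain ⟨n₁, hn₁⟩ := hdn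
  obtain ⟨x₁, hx₁⟩ := hdx
  have hdz : (d:ℤ) ≠ 0 := by exact_mod_cast hd0.ne'
  have hn₁' : n₁ = (n:ℤ)/(d:ℤ) := by rw [hn₁, Int.mul_ediv_cancel_left _ hdz]
  have hx₁' : x₁ = x/(d:ℤ) := by rw [hx₁, Int.mul_ediv_cancel_left _ hdz]
  have hco : Int.gcd n₁ x₁ = 1 := by
    rw [hn₁', hx₁', hd]
    exact Int.gcd_div_gcd_div_gcd (by rw [← hd]; exact_mod_cast hd0)
  have hdnn : d ∣ n := Int.natCast_dvd_natCast.mp ⟨n₁, hn₁⟩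
  have hnd : ((n / d : ℕ) : ℤ) = n₁ := by
    apply mul_left_cancel₀ hdz
    rw [← hn₁]
    exact_mod_cast Nat.mul_div_cancel' hdnn
  rw [hnd]
  have h2 : n₁ ∣ x₁ * m := by
    rcases h with ⟨t, ht⟩
    refine ⟨t, ?_⟩
    have : (d:ℤ) * (x₁ * m) = (d:ℤ) * (n₁ * t) := by rw [← mul_assoc, ← hx₁, ht, hn₁, mul_assoc]
    exact mul_left_cancel₀ (by exact_mod_cast hd0.ne') this
  exact Int.dvd_of_dvd_mul_right_of_gcd_one h2 hco

lemma gcd_eq_of_ann {n : ℕ} (hn : 0 < n) {x y : ℤ}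
    (h : ∀ z : ZMod n, (x : ZMod n) * z = 0 → (y : ZMod n) * z = 0) :
    (n / Int.gcd (n:ℤ) y : ℕ) ∣ (n / Int.gcd (n:ℤ) x : ℕ) := by
  set dx : ℕ := Int.gcd (n:ℤ) x with hdx
  have hdnn : dx ∣ n := Int.natCast_dvd_natCast.mp ((Int.gcd_dvd_left _ _))
  have hxz : (x : ZMod n) * ((n / dx : ℕ) : ZMod n) = 0 := by
    have hcast : ((x * ((n / dx : ℕ) : ℤ) : ℤ) : ZMod n) = 0 := by
      rw [ZMod.intCast_zmod_eq_zero_iff_dvd]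
      obtain ⟨x₁, hx₁⟩ : (dx:ℤ) ∣ x := (Int.gcd_dvd_right _ _)
      refine ⟨x₁, ?_⟩
      have hmul : ((dx : ℤ)) * ((n/dx : ℕ) : ℤ) = (n:ℤ) := by
        exact_mod_cast Nat.mul_div_cancel' hdnn
      calc x * ((n/dx:ℕ):ℤ) = x₁ * ((dx:ℤ) * ((n/dx:ℕ):ℤ)) := by rw [hx₁]; ring
      _ = (n:ℤ) * x₁ := by rw [hmul]; ring
    rwa [Int.cast_mul, Int.cast_natCast] at hcast
  have hyz := h _ hxz
  have hcast2 : ((y * ((n / dx : ℕ) : ℤ) : ℤ) : ZMod n) = 0 := by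
    rw [Int.cast_mul, Int.cast_natCast]; exact hyz
  rw [ZMod.intCast_zmod_eq_zero_iff_dvd] at hcast2
  have := Ndvd_of_dvd_mul hn (x := y) (m := ((n / dx : ℕ) : ℤ)) hcast2
  exact_mod_cast this

lemma assoc_gcd {n : ℕ} (hn : 0 < n) (x : ℤ) :
    ∃ u : (ZMod n)ˣ, (x : ZMod n) = (u : ZMod n) * ((Int.gcd (n:ℤ) x : ℕ) : ZMod n) := by
  have : NeZero n := ⟨hn.ne'⟩
  obtain ⟨d, hdn, u, hu, hw⟩ := ZMod.eq_unit_mul_divisor ((x : ℤ) : ZMod n)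
  have huval : ((u.val : ℕ) : ZMod n) = u := by rw [ZMod.natCast_val, ZMod.cast_id]
  have hco : Int.gcd ((u.val : ℕ) : ℤ) (n:ℤ) = 1 := by
    rw [Int.gcd_natCast_natCast]
    have := ZMod.val_coe_unit_coprime hu.unit
    rwa [hu.unit_spec] at this
  have hgd : Int.gcd (n:ℤ) x = d := by
    have hcong : ((x : ℤ) : ZMod n) = (((u.val * d : ℕ) : ℤ) : ZMod n) := by
      push_cast
      rw [huval]
      exact hw
    rw [gcd_cast_eq hcong]
    have : (((u.val * d : ℕ) : ℤ)) = ((u.val : ℕ) : ℤ) * ((d : ℕ) : ℤ) := by push_cast; ring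
    rw [this, gcd_unit_mul hco]
    rw [Int.gcd_natCast_natCast]
    exact Nat.gcd_eq_right hdn
  refine ⟨hu.unit, ?_⟩
  rw [hgd, hu.unit_spec]
  exact hw

lemma exists_unit_mul {n : ℕ} (hn : 0 < n) {x y : ℤ}
    (h : Int.gcd (n:ℤ) x = Int.gcd (n:ℤ) y) :
    ∃ v : (ZMod n)ˣ, (x : ZMod n) = (v : ZMod n) * (y : ZMod n) := by
  obtain ⟨ux, hux⟩ := assoc_gcd hn x
  obtain ⟨uy, huy⟩ := assoc_gcd hn y
  refine ⟨ux * uy⁻¹, ?_⟩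
  rw [hux, h, huy]
  rw [Units.val_mul, mul_assoc]
  congr 1
  rw [← mul_assoc, ← Units.val_mul, inv_mul_cancel]
  simp

lemma main_forward {n : ℕ} [NeZero n] (u B A : ZMod n) (hA : u * A = 1)
    (f : ZMod n → ZMod n) (hf : Function.Injective f)
    (H : ∀ x y, f (u*x + (1-u)*y) = B * f x + (1-B) * f y) :
    ∃ c : ZMod n, c = (1-B) * (f 1 - f 0) ∧ c * u = B * c ∧
      (∀ y, c * y = 0 ↔ (1-u) * y = 0) := by
  have T0 : ∀ w y, f (w + (1-u)*y) = f w + (1-B)*(f y - f 0) := by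
    intro w y
    have h1 := H (A*w) y
    have h2 := H (A*w) 0
    have hu : u * (A * w) = w := by rw [← mul_assoc, hA, one_mul]
    rw [hu] at h1 h2
    rw [mul_zero, add_zero] at h2
    linear_combination h1 - h2
  set ψ : ZMod n → ZMod n := fun y => (1-B)*(f y - f 0) with hψdef
  have hadd : ∀ y z, ψ (y + z) = ψ y + ψ z := by
    intro y z
    have h1 := T0 0 (y + z)
    have h2 := T0 0 y
    have h3 := T0 ((1-u)*y) z
    have e1 : (0:ZMod n) + (1-u)*(y+z) = (1-u)*y + (1-u)*z := by ring
    have e2 : (0:ZMod n) + (1-u)*y = (1-u)*y := by ring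
    rw [e1] at h1
    rw [e2] at h2
    show (1-B)*(f (y+z) - f 0) = (1-B)*(f y - f 0) + (1-B)*(f z - f 0)
    linear_combination h3 + h2 - h1
  set c : ZMod n := ψ 1 with hcdef
  have hψ : ∀ y, ψ y = c * y := by
    intro y
    let φ : ZMod n →+ ZMod n := AddMonoidHom.mk' ψ hadd
    have hval : y = (y.val : ℕ) • (1 : ZMod n) := by
      rw [nsmul_eq_mul, mul_one, ZMod.natCast_val, ZMod.cast_id]
    calc ψ y = φ y := rfl
    _ = φ ((y.val : ℕ) • (1:ZMod n)) := by rw [← hval]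
    _ = (y.val : ℕ) • φ 1 := by rw [map_nsmul]
    _ = (y.val : ZMod n) * c := by rw [nsmul_eq_mul]; rfl
    _ = c * y := by rw [ZMod.natCast_val, ZMod.cast_id]; ring
  have T0' : ∀ y, f ((1-u)*y) = f 0 + c * y := by
    intro y
    have := T0 0 y
    rw [zero_add] at this
    rw [this, ← hψ]
  have hM : c * u = B * c := by
    have h1 := H ((1-u)*1) 0
    have harg : u * ((1-u)*1) + (1-u)*0 = (1-u)*u := by ring
    rw [harg, T0' u] at h1
    have h2 := T0' 1
    linear_combination h1 + B * h2
  refine ⟨c, by simp [hcdef, hψdef], hM, fun y => ⟨fun h => ?_, fun h => ?_⟩⟩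
  · have h1 := T0' y
    rw [h, add_zero] at h1
    exact hf h1
  · have h1 := T0' y
    rw [h] at h1
    linear_combination -h1

/-- Let `n ≥ 1` and let `a, b` be integers coprime to `n`.  The linear Alexander
quandle `Λₙ/(t-a)` is dual to `Λₙ/(t-b)`, i.e. there is a bijection `f` of
`ZMod n` carrying the dual operation of `Λₙ/(t-a)` (where `x ^ ȳ` is the unique
`z` with `a*z + (1-a)*y = x`) to the operation of `Λₙ/(t-b)`, iff
`N(n,a) = N(n,b)` and `a·b ≡ 1 (mod N(n,a))`, where `N(n,c) = n / gcd(n, 1-c)`. -/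
theorem linear_alexander_quandles_dual_iff
    (n : ℕ) (hn : 1 ≤ n) (a b : ℤ)
    (ha : Int.gcd a n = 1) (hb : Int.gcd b n = 1) :
    (∃ f : ZMod n → ZMod n, Function.Bijective f ∧
        ∀ x y z : ZMod n,
          (a : ZMod n) * z + ((1 - a : ℤ) : ZMod n) * y = x →
            f z = (b : ZMod n) * f x + ((1 - b : ℤ) : ZMod n) * f y) ↔
      (n / Int.gcd (n : ℤ) (1 - a) = n / Int.gcd (n : ℤ) (1 - b) ∧
        a * b ≡ 1 [ZMOD ((n / Int.gcd (n : ℤ) (1 - a) : ℕ) : ℤ)]) := by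
  have hn0 : 0 < n := hn
  have : NeZero n := ⟨hn0.ne'⟩
  obtain ⟨a', q, hpq⟩ : IsCoprime a (n:ℤ) := Int.isCoprime_iff_gcd_eq_one.mpr ha
  obtain ⟨b', qb, hpqb⟩ : IsCoprime b (n:ℤ) := Int.isCoprime_iff_gcd_eq_one.mpr hb
  have haa' : (n:ℤ) ∣ a*a' - 1 := ⟨-q, by linear_combination hpq⟩
  have hbb' : (n:ℤ) ∣ b*b' - 1 := ⟨-qb, by linear_combination hpqb⟩
  set u : ZMod n := ((a':ℤ) : ZMod n) with hu_def
  set A : ZMod n := ((a:ℤ) : ZMod n) with hA_def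
  set B : ZMod n := ((b:ℤ) : ZMod n) with hB_def
  set B' : ZMod n := ((b':ℤ) : ZMod n) with hB'_def
  have haa'0 : ((a*a' - 1 : ℤ) : ZMod n) = 0 := (ZMod.intCast_zmod_eq_zero_iff_dvd _ _).mpr haa'
  have hbb'0 : ((b*b' - 1 : ℤ) : ZMod n) = 0 := (ZMod.intCast_zmod_eq_zero_iff_dvd _ _).mpr hbb'
  have huA : u * A = 1 := by
    push_cast at haa'0; linear_combination haa'0
  have hBB' : B * B' = 1 := by
    push_cast at hbb'0; linear_combination hbb'0
  have hA_u : A * u = 1 := by linear_combination huA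
  have hcast_a : ((1 - a : ℤ) : ZMod n) = 1 - A := by push_cast; ring
  have hcast_b : ((1 - b : ℤ) : ZMod n) = 1 - B := by push_cast; ring
  have hcast_u : ((1 - a' : ℤ) : ZMod n) = 1 - u := by push_cast; ring
  have hcopa' : Int.gcd a' (n:ℤ) = 1 :=
    Int.isCoprime_iff_gcd_eq_one.mp ⟨a, q, by linear_combination hpq⟩
  have hga : Int.gcd (n:ℤ) (1-a') = Int.gcd (n:ℤ) (1-a) := by
    have hcong : ((1-a' : ℤ) : ZMod n) = ((a'*(a-1) : ℤ) : ZMod n) := by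
      rw [ZMod.intCast_eq_intCast_iff]
      refine (Int.ModEq.symm (Int.modEq_iff_dvd.mpr ?_))
      have he : (1-a') - (a'*(a-1)) = -(a*a' - 1) := by ring
      rw [he]
      exact dvd_neg.mpr haa'
    rw [gcd_cast_eq hcong, gcd_unit_mul hcopa', Int.gcd, Int.gcd]
    congr 1
    rw [show (a-1 : ℤ) = -(1-a) by ring, Int.natAbs_neg]
  constructor
  · rintro ⟨f, hbij, hop⟩
    have Hf : ∀ x y, f (u*x + (1-u)*y) = B * f x + (1-B) * f y := by
      intro x y
      have harg : A * (u*x + (1-u)*y) + (1-A)*y = x := by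
        linear_combination (x - y) * hA_u
      have := hop x y (u*x + (1-u)*y) (by rw [hcast_a]; exact harg)
      rwa [hcast_b] at this
    let E := Equiv.ofBijective f hbij
    have hfE : ∀ t, f (E.symm t) = t := fun t => E.apply_symm_apply t
    set g : ZMod n → ZMod n := fun t => E.symm t with hg_def
    have Hg : ∀ x y, g (B*x + (1-B)*y) = u * g x + (1-u) * g y := by
      intro x y
      apply hbij.1
      rw [hfE, Hf, hfE, hfE]
    have hginj : Function.Injective g := E.symm.injective
    obtain ⟨c, hc, hcu, hann⟩ := main_forward u B A huA f hbij.1 Hf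
    obtain ⟨c', hc', hc'B, hann'⟩ := main_forward B u B' hBB' g hginj Hg
    have hBu : ∀ y : ZMod n, (1-B)*y = 0 → (1-u)*y = 0 := by
      intro y hy
      apply (hann y).mp
      rw [hc]
      calc (1-B)*(f 1 - f 0) * y = (f 1 - f 0) * ((1-B)*y) := by ring
      _ = 0 := by rw [hy, mul_zero]
    have huB : ∀ y : ZMod n, (1-u)*y = 0 → (1-B)*y = 0 := by
      intro y hy
      apply (hann' y).mp
      rw [hc']
      calc (1-u)*(g 1 - g 0) * y = (g 1 - g 0) * ((1-u)*y) := by ring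
      _ = 0 := by rw [hy, mul_zero]
    have h1 : ∀ z : ZMod n, ((1-b : ℤ):ZMod n) * z = 0 → ((1-a':ℤ):ZMod n) * z = 0 := by
      intro z
      rw [hcast_u, hcast_b]; exact hBu z
    have h2 : ∀ z : ZMod n, ((1-a' : ℤ):ZMod n) * z = 0 → ((1-b:ℤ):ZMod n) * z = 0 := by
      intro z
      rw [hcast_u, hcast_b]; exact huB z
    have hd1 := gcd_eq_of_ann hn0 h1
    have hd2 := gcd_eq_of_ann hn0 h2
    have hNN : (n / Int.gcd (n:ℤ) (1-a') : ℕ) = n / Int.gcd (n:ℤ) (1-b) :=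
      Nat.dvd_antisymm hd1 hd2
    rw [hga] at hNN
    refine ⟨hNN, ?_⟩
    have hcy : c * (u - B) = 0 := by linear_combination hcu
    have h3 : (1-u)*(u-B) = 0 := (hann _).mp hcy
    have h4 : ((((1-a')*(a'-b)) : ℤ) : ZMod n) = 0 := by
      push_cast; linear_combination h3
    have h5 : (n:ℤ) ∣ (1-a')*(a'-b) := (ZMod.intCast_zmod_eq_zero_iff_dvd _ _).mp h4
    have h6 := Ndvd_of_dvd_mul hn0 h5
    rw [hga] at h6
    have hdvdn : Int.gcd (n:ℤ) (1-a) ∣ n := Int.natCast_dvd_natCast.mp (Int.gcd_dvd_left _ _)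
    have hNn : (n / Int.gcd (n:ℤ) (1-a) : ℕ) ∣ n := Nat.div_dvd_of_dvd hdvdn
    have h7 : ((n / Int.gcd (n:ℤ) (1-a) : ℕ) : ℤ) ∣ a*a' - 1 :=
      dvd_trans (Int.natCast_dvd_natCast.mpr hNn) haa'
    refine (Int.modEq_iff_dvd).mpr ?_
    have he : (1 : ℤ) - a*b = a*(a'-b) - (a*a' - 1) := by ring
    rw [he]
    exact dvd_sub (Dvd.dvd.mul_left h6 a) h7
  · rintro ⟨hN, hmod⟩
    set d : ℕ := Int.gcd (n:ℤ) (1-a) with hd_def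
    have hdvdn : d ∣ n := Int.natCast_dvd_natCast.mp (Int.gcd_dvd_left _ _)
    have hd0 : 0 < d := Int.gcd_pos_of_ne_zero_left _ (by exact_mod_cast hn0.ne')
    have : NeZero d := ⟨hd0.ne'⟩
    have hdb : Int.gcd (n:ℤ) (1-b) = d := by
      have hdvdnb : Int.gcd (n:ℤ) (1-b) ∣ n := Int.natCast_dvd_natCast.mp (Int.gcd_dvd_left _ _)
      have e1 : n / (n/d) = d := Nat.div_div_self hdvdn hn0.ne'
      have e2 : n / (n / Int.gcd (n:ℤ) (1-b)) = Int.gcd (n:ℤ) (1-b) :=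
        Nat.div_div_self hdvdnb hn0.ne'
      rw [← e2, ← hN, e1]
    set N : ℕ := n / d with hN_def
    have hNdvdn : N ∣ n := Nat.div_dvd_of_dvd hdvdn
    have hdN : (d:ℤ) * (N:ℤ) = (n:ℤ) := by exact_mod_cast Nat.mul_div_cancel' hdvdn
    have hmod' : (N:ℤ) ∣ a*b - 1 := by
      have h := Int.modEq_iff_dvd.mp hmod
      have he : a*b - 1 = -(1 - a*b) := by ring
      rw [he]
      exact dvd_neg.mpr h
    have hNaa' : (N:ℤ) ∣ a*a' - 1 := (Int.natCast_dvd_natCast.mpr hNdvdn).trans haa'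
    have h6 : (N:ℤ) ∣ a*(a'-b) := by
      have he : a*(a'-b) = (a*a'-1) - (a*b-1) := by ring
      rw [he]
      exact dvd_sub hNaa' hmod'
    have hcopaN : Int.gcd (N:ℤ) a = 1 := by
      have h1 : (Int.gcd (N:ℤ) a : ℤ) ∣ (Int.gcd a (n:ℤ) : ℤ) :=
        Int.dvd_coe_gcd (Int.gcd_dvd_right (N:ℤ) a) ((Int.gcd_dvd_left (N:ℤ) a).trans (Int.natCast_dvd_natCast.mpr hNdvdn))
      rw [ha] at h1
      exact Nat.dvd_one.mp (by exact_mod_cast h1)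
    have h7 : (N:ℤ) ∣ a' - b := Int.dvd_of_dvd_mul_right_of_gcd_one h6 hcopaN
    obtain ⟨v, hv⟩ := exists_unit_mul hn0 (x := 1-a') (y := 1-b) (by rw [hga, hdb])
    have hvBu : (v:ZMod n) * (1 - B) = 1 - u := by
      rw [← hcast_b, ← hcast_u]
      exact hv.symm
    set π : ZMod n →+* ZMod d := ZMod.castHom hdvdn (ZMod d) with hπ
    set r : ZMod n → ZMod n := fun x => (((π x).val : ℕ) : ZMod n) with hr
    have hπr : ∀ x, π (r x) = π x := by
      intro x
      rw [hr]
      simp only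
      rw [map_natCast, ZMod.natCast_val, ZMod.cast_id]
    have hker : ∀ w : ZMod n, π w = 0 → ∃ s : ZMod n, w = ((d:ℕ) : ZMod n) * s := by
      intro w hw
      have hwval : ((w.val : ℕ) : ZMod n) = w := by rw [ZMod.natCast_val, ZMod.cast_id]
      have h0 : ((w.val : ℕ) : ZMod d) = 0 := by rw [← map_natCast π, hwval]; exact hw
      have hdvd : d ∣ w.val := (ZMod.natCast_eq_zero_iff _ _).mp h0
      obtain ⟨k, hk⟩ := hdvd
      exact ⟨(k : ZMod n), by rw [← hwval, hk]; push_cast; ring⟩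
    set e : ZMod n := (v : ZMod n) - 1 with he_def
    have heB : e * (1 - B) = B - u := by
      rw [he_def]
      linear_combination hvBu
    have hub : (u - B) * ((d:ℕ) : ZMod n) = 0 := by
      have h0 : (((a'-b) * (d:ℕ) : ℤ) : ZMod n) = 0 := by
        rw [ZMod.intCast_zmod_eq_zero_iff_dvd]
        obtain ⟨t, ht⟩ := h7
        refine ⟨t, ?_⟩
        rw [ht]
        linear_combination t * hdN
      push_cast at h0
      linear_combination h0
    refine ⟨fun x => x + e * r x, ?_, ?_⟩
    · have hinj : Function.Injective (fun x : ZMod n => x + e * r x) := by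
        intro x y hxy
        dsimp only at hxy
        have hπe : π e = π (v:ZMod n) - 1 := by rw [he_def, map_sub, map_one]
        have h1 : (π ((v:ZMod n))) * π x = (π (v:ZMod n)) * π y := by
          have h2 := congrArg π hxy
          rw [map_add, map_add, map_mul, map_mul, hπr, hπr] at h2
          linear_combination h2 + (π x - π y) * hπe.symm
        have hunit : IsUnit (π (v : ZMod n)) := (v.isUnit).map π
        have h2 : π x = π y := hunit.mul_left_cancel h1
        have h3 : r x = r y := by rw [hr]; simp only; rw [h2]
        rw [h3] at hxy
        exact add_right_cancel hxy
      exact Finite.injective_iff_bijective.mp hinj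
    · intro x y z hxyz
      rw [hcast_a] at hxyz
      rw [hcast_b]
      dsimp only
      have hz : z = u*x + (1-u)*y := by
        linear_combination u * hxyz + (y - z) * huA
      have hπz : π z = π x := by
        have hzx : z - x = (((a' - 1 : ℤ)) : ZMod n) * (x - y) := by
          push_cast
          linear_combination hz
        have hπa : π (((a'-1 : ℤ)) : ZMod n) = 0 := by
          rw [map_intCast, ZMod.intCast_zmod_eq_zero_iff_dvd]
          have hda : (d:ℤ) ∣ 1 - a' := hga ▸ Int.gcd_dvd_right (n:ℤ) (1-a')
          rw [show (a'-1:ℤ) = -(1-a') by ring]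
          exact dvd_neg.mpr hda
        have h2 := congrArg π hzx
        rw [map_sub, map_mul, hπa, zero_mul] at h2
        linear_combination h2
      have hrz : r z = r x := by rw [hr]; simp only; rw [hπz]
      obtain ⟨s, hs⟩ := hker (x - r x) (by rw [map_sub, hπr]; ring)
      obtain ⟨t, ht⟩ := hker (y - r y) (by rw [map_sub, hπr]; ring)
      rw [hrz]
      linear_combination hz + (r x - r y) * heB + (u - B) * hs - (u - B) * ht + (s - t) * hub
end

section
/- For any prime p, there are exactly p−1 isomorphism classes of Alexander quandles with p elements; namely, every Alexander quandle with p elements is isomorphic to Λ_p/(t−a) for some a ∈ {1, …, p−1}, and the quandles Λ_p/(t−a) for a = 1, …, p−1 are pairwise non-isomorphic. -/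
lemma hom_eq_mul_aux {p : ℕ} [NeZero p] (g : ZMod p → ZMod p)
    (hadd : ∀ x y, g (x + y) = g x + g y) (x : ZMod p) :
    g x = x * g 1 := by
  obtain ⟨n, rfl⟩ := ZMod.natCast_zmod_surjective x
  induction n with
  | zero =>
      have h0 : g 0 = 0 := by
        have h := hadd 0 0
        simp only [add_zero] at h
        linear_combination -h
      simpa using h0
  | succ n ih =>
      push_cast
      rw [hadd, ih]
      ring

/-- For any prime `p` there are exactly `p - 1` isomorphism classes of Alexander
quandles with `p` elements: every Alexander quandle (an abelian group with a
`ℤ`-automorphism `φ`, quandle operation `x ^ y = φ x + y - φ y`) with `p`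
elements is isomorphic to the linear quandle `Λ_p/(t-a)` (i.e. `ZMod p` with
`x ^ y = a*x + (1-a)*y`) for some `a ∈ {1, …, p-1}`, and for distinct
`a, b ∈ {1, …, p-1}` the quandles `Λ_p/(t-a)` and `Λ_p/(t-b)` are not
isomorphic. -/
theorem alexander_quandles_of_prime_order
    (p : ℕ) (hp : p.Prime) :
    (∀ (A : Type) [AddCommGroup A] (φ : A ≃+ A), Nat.card A = p →
      ∃ a : ℕ, 1 ≤ a ∧ a ≤ p - 1 ∧
        ∃ f : A → ZMod p, Function.Bijective f ∧
          ∀ x y : A,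
            f (φ x + y - φ y) = (a : ZMod p) * f x + (1 - (a : ZMod p)) * f y) ∧
    (∀ a b : ℕ, 1 ≤ a → a ≤ p - 1 → 1 ≤ b → b ≤ p - 1 → a ≠ b →
      ¬ ∃ f : ZMod p → ZMod p, Function.Bijective f ∧
          ∀ x y : ZMod p,
            f ((a : ZMod p) * x + (1 - (a : ZMod p)) * y)
              = (b : ZMod p) * f x + (1 - (b : ZMod p)) * f y) := by
  haveI : Fact p.Prime := ⟨hp⟩
  haveI : NeZero p := ⟨hp.ne_zero⟩
  constructor
  · intro A _ φ hA
    have hc : IsAddCyclic A := isAddCyclic_of_prime_card hA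
    have ψ := zmodAddCyclicAddEquiv hc
    rw [hA] at ψ
    set g : ZMod p → ZMod p := fun x => ψ.symm (φ (ψ x)) with hg
    have hadd : ∀ x y, g (x + y) = g x + g y := by
      intro x y; simp [hg, map_add]
    have hlin : ∀ x, g x = x * g 1 := hom_eq_mul_aux g hadd
    set c : ZMod p := g 1 with hc1
    have hginj : Function.Injective g :=
      ψ.symm.injective.comp (φ.injective.comp ψ.injective)
    have hg0 : g 0 = 0 := by simp [hg]
    have hcne : c ≠ 0 := by
      intro h
      have : g 1 = g 0 := by rw [hg0, ← hc1, h]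
      exact one_ne_zero (hginj this)
    refine ⟨c.val, ?_, ?_, fun x => ψ.symm x, ψ.symm.bijective, ?_⟩
    · have : c.val ≠ 0 := by rwa [Ne, ZMod.val_eq_zero]
      omega
    · have := ZMod.val_lt c
      omega
    · have hcv : ((c.val : ℕ) : ZMod p) = c := by
        simp [ZMod.natCast_val, ZMod.cast_id]
      intro x y
      rw [hcv]
      have key : ∀ z : A, ψ.symm (φ z) = c * ψ.symm z := by
        intro z
        have := hlin (ψ.symm z)
        simp only [hg, AddEquiv.apply_symm_apply] at this
        rw [this, mul_comm]
      show ψ.symm (φ x + y - φ y) = c * ψ.symm x + (1 - c) * ψ.symm y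
      rw [map_sub, map_add, key x, key y]
      ring
  · rintro a b ha1 ha2 hb1 hb2 hab ⟨f, hbij, hf⟩
    have hplt : 1 < p := hp.one_lt
    set A : ZMod p := (a : ZMod p) with hAdef
    set B : ZMod p := (b : ZMod p) with hBdef
    have hva : A.val = a := ZMod.val_cast_of_lt (by omega)
    have hvb : B.val = b := ZMod.val_cast_of_lt (by omega)
    have hAB : A ≠ B := fun h => hab (by rw [← hva, ← hvb, h])
    have hA0 : A ≠ 0 := fun h => by
      have := ZMod.val_eq_zero A |>.2 h; omega
    set g : ZMod p → ZMod p := fun x => f x - f 0 with hgdef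
    have hginj : Function.Injective g := by
      intro x y h
      exact hbij.1 (by simpa [hgdef, sub_left_inj] using h)
    have hg0 : g 0 = 0 := by simp [hgdef]
    have hg : ∀ x y, g (A * x + (1 - A) * y) = B * g x + (1 - B) * g y := by
      intro x y
      simp only [hgdef]
      rw [hf]
      ring
    by_cases hA1 : A = 1
    · -- then B ≠ 1 and g is constant: contradiction
      have hB1 : B ≠ 1 := fun h => hAB (hA1.trans h.symm)
      have hconst : ∀ x y : ZMod p, g x = g y := by
        intro x y
        have := hg x y
        rw [hA1] at this
        simp only [one_mul, sub_self, zero_mul, add_zero] at this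
        have h2 : (1 - B) * g x = (1 - B) * g y := by
          linear_combination this
        exact mul_left_cancel₀ (sub_ne_zero.2 fun h => hB1 h.symm) h2
      have : (1 : ZMod p) = 0 := hginj ((hconst 1 0).trans hg0 ▸ by rw [hconst 1 0, hg0, hg0])
      exact one_ne_zero this
    · have h1A : (1 : ZMod p) - A ≠ 0 := sub_ne_zero.2 fun h => hA1 h.symm
      have hgu : ∀ u, g u = B * g (A⁻¹ * u) := by
        intro u
        have := hg (A⁻¹ * u) 0
        rwa [mul_zero, add_zero, hg0, mul_zero, add_zero, ← mul_assoc,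
          mul_inv_cancel₀ hA0, one_mul] at this
      have hgv : ∀ v, g v = (1 - B) * g ((1 - A)⁻¹ * v) := by
        intro v
        have := hg 0 ((1 - A)⁻¹ * v)
        rwa [mul_zero, zero_add, hg0, mul_zero, zero_add, ← mul_assoc,
          mul_inv_cancel₀ h1A, one_mul] at this
      have hadd : ∀ u v, g (u + v) = g u + g v := by
        intro u v
        have := hg (A⁻¹ * u) ((1 - A)⁻¹ * v)
        rw [← mul_assoc, mul_inv_cancel₀ hA0, one_mul, ← mul_assoc,
          mul_inv_cancel₀ h1A, one_mul] at this
        rw [this, ← hgu, ← hgv]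
      have hlin : ∀ x, g x = x * g 1 := hom_eq_mul_aux g hadd
      have hcne : g 1 ≠ 0 := fun h => one_ne_zero (hginj (h.trans hg0.symm))
      have key := hg 1 0
      rw [mul_one, mul_zero, add_zero, hg0, mul_zero, add_zero, hlin A] at key
      exact hAB (mul_right_cancel₀ hcne key)
end

section
/- If M is a finite Alexander quandle whose cardinality n satisfies n ≡ 2 (mod 4), then M is not connected. -/
open LaurentPolynomial

/-- If `M` is a finite Alexander quandle (a module over `Λ = ℤ[t,t⁻¹]`, with
quandle operation `x ^ y = t•x + (1-t)•y`) whose cardinality is `≡ 2 (mod 4)`,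
then `M` is not connected, i.e. `(1-t)M ≠ M`. -/
theorem alexander_quandle_card_two_mod_four_not_connected
    (M : Type) [AddCommGroup M] [Module (LaurentPolynomial ℤ) M] [Finite M]
    (hcard : Nat.card M % 4 = 2) :
    ¬ (∀ y : M, ∃ x : M, ((1 : LaurentPolynomial ℤ) - T 1) • x = y) := by
  intro hsurj
  set c : LaurentPolynomial ℤ := (1 : LaurentPolynomial ℤ) - T 1 with hc
  -- the map x ↦ c • x is injective since it is surjective on a finite type
  have hinj : Function.Injective (fun x : M => c • x) :=
    Finite.injective_iff_surjective.mpr (fun y => hsurj y)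
  -- 2 divides the cardinality
  have h2 : 2 ∣ Nat.card M := by omega
  have h4 : ¬ (4 ∣ Nat.card M) := by omega
  haveI : Fact (Nat.Prime 2) := ⟨Nat.prime_two⟩
  obtain ⟨u, hu⟩ := exists_prime_addOrderOf_dvd_card' (G := M) 2 h2
  have hu0 : u ≠ 0 := by
    intro h; rw [h, addOrderOf_zero] at hu; omega
  have huu : u + u = 0 := by
    have := addOrderOf_nsmul_eq_zero u
    rw [hu, two_nsmul] at this
    exact this
  -- the 2-torsion subgroup
  set S : AddSubgroup M :=
    { carrier := {x | x + x = 0}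
      zero_mem' := by simp
      add_mem' := by
        intro a b ha hb
        simp only [Set.mem_setOf_eq] at *
        rw [show a + b + (a + b) = (a + a) + (b + b) by abel, ha, hb, add_zero]
      neg_mem' := by
        intro a ha
        simp only [Set.mem_setOf_eq] at *
        rw [← neg_add, ha, neg_zero] } with hSdef
  have hmemS : ∀ x : M, x ∈ S ↔ x + x = 0 := fun x => Iff.rfl
  -- every element of S is 2-torsion, so every prime dividing |S| is 2
  have hprime2 : ∀ p : ℕ, p.Prime → p ∣ Nat.card S → p = 2 := by
    intro p hp hpd
    haveI : Fact p.Prime := ⟨hp⟩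
    obtain ⟨x, hx⟩ := exists_prime_addOrderOf_dvd_card' (G := S) p hpd
    have hx2 : (2 : ℕ) • x = 0 := by
      have : (x : M) + (x : M) = 0 := x.2
      ext
      push_cast [two_nsmul]
      exact this
    have := addOrderOf_dvd_of_nsmul_eq_zero hx2
    rw [hx] at this
    exact (Nat.prime_dvd_prime_iff_eq hp Nat.prime_two).mp this
  have hSdvd : Nat.card S ∣ Nat.card M := AddSubgroup.card_addSubgroup_dvd_card S
  have huS : u ∈ S := huu
  have h0S : (0 : M) ∈ S := S.zero_mem
  -- |S| ≥ 2
  have hS2 : 2 ≤ Nat.card S := by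
    have : Nontrivial S := ⟨⟨⟨u, huS⟩, 0, by simp [hu0]⟩⟩
    exact Finite.one_lt_card
  -- |S| = 2
  have hScard : Nat.card S = 2 := by
    by_contra hne
    -- |S| is even
    have h2S : 2 ∣ Nat.card S := by
      have := hprime2 (Nat.card S).minFac
        (Nat.minFac_prime (by omega)) (Nat.minFac_dvd _)
      rw [← this]; exact Nat.minFac_dvd _
    obtain ⟨m, hm⟩ := h2S
    have hm1 : 1 < m := by omega
    have hq := hprime2 m.minFac (Nat.minFac_prime (by omega))
      (dvd_trans (Nat.minFac_dvd m) ⟨2, by omega⟩)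
    have : 4 ∣ Nat.card S := by
      obtain ⟨k, hk⟩ := Nat.minFac_dvd m
      rw [hq] at hk
      exact ⟨k, by omega⟩
    exact h4 (this.trans hSdvd)
  -- any two nonzero elements of S coincide
  have huniq : ∀ a b : M, a ∈ S → b ∈ S → a ≠ 0 → b ≠ 0 → a = b := by
    intro a b ha hb ha0 hb0
    by_contra hab
    haveI : Fintype S := Fintype.ofFinite S
    classical
    have hcard3 : ({⟨0, h0S⟩, ⟨a, ha⟩, ⟨b, hb⟩} : Finset S).card = 3 := by
      rw [Finset.card_insert_of_notMem (by simp [Subtype.ext_iff, ha0.symm, hb0.symm]),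
        Finset.card_insert_of_notMem (by simp [Subtype.ext_iff, hab]),
        Finset.card_singleton]
    have := Finset.card_le_univ ({⟨0, h0S⟩, ⟨a, ha⟩, ⟨b, hb⟩} : Finset S)
    rw [hcard3, ← Nat.card_eq_fintype_card, hScard] at this
    omega
  -- c • u ∈ S and is nonzero, hence c • u = u
  have hcuS : c • u ∈ S := by
    rw [hmemS, ← smul_add, huu, smul_zero]
  have hcu0 : c • u ≠ 0 := by
    intro h
    apply hu0
    have : c • u = c • (0 : M) := by rw [h, smul_zero]
    exact hinj this
  have hcu : c • u = u := huniq _ _ hcuS huS hcu0 hu0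
  -- then (T 1) • u = 0
  have htu : (T 1 : LaurentPolynomial ℤ) • u = 0 := by
    have h := hcu
    rw [hc, sub_smul, one_smul, sub_eq_self] at h
    exact h
  -- but T 1 is invertible: T (-1) * T 1 = 1
  apply hu0
  calc u = ((T (-1) * T 1 : LaurentPolynomial ℤ)) • u := by
        rw [← T_add]; norm_num
    _ = (T (-1) : LaurentPolynomial ℤ) • ((T 1 : LaurentPolynomial ℤ) • u) := mul_smul _ _ _
    _ = 0 := by rw [htu, smul_zero]
end

section
/- The linear Alexander quandles Λ₉/(t−4) and Λ₉/(t−7) are isomorphic as quandles, but they are not isomorphic as Λ-modules. -/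
/-- The linear Alexander quandles `Λ₉/(t-4)` and `Λ₉/(t-7)` (namely `ZMod 9`
with quandle operation `x ^ y = a*x + (1-a)*y` for `a = 4`, resp. `a = 7`) are
isomorphic as quandles, but they are not isomorphic as `Λ`-modules (there is
no additive bijection `g` of `ZMod 9` with `g (4*x) = 7 * g x`). -/
theorem lambda9_t4_t7_quandle_iso_not_module_iso :
    (∃ f : ZMod 9 → ZMod 9, Function.Bijective f ∧
        ∀ x y : ZMod 9, f (4 * x + (1 - 4) * y) = 7 * f x + (1 - 7) * f y) ∧
    ¬ (∃ g : ZMod 9 → ZMod 9, Function.Bijective g ∧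
        (∀ x y : ZMod 9, g (x + y) = g x + g y) ∧
        ∀ x : ZMod 9, g (4 * x) = 7 * g x) := by
  constructor
  · exact ⟨fun x => ![(0 : ZMod 9), 1, 2, 6, 7, 8, 3, 4, 5] x, by decide, by decide⟩
  · rintro ⟨g, hb, hadd, hmul⟩
    have h0 : g 0 = 0 := by
      have h := hadd 0 0
      simp only [add_zero] at h
      linear_combination -h
    have h4 : g 4 = 4 * g 1 := by
      have h1 := hadd 1 1
      have h2 := hadd 2 1
      have h3 := hadd 3 1
      norm_num at h1 h2 h3
      rw [h3, h2, h1]; ring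
    have h7 : g 4 = 7 * g 1 := by
      have := hmul 1
      norm_num at this
      exact this
    have h3g : (3 : ZMod 9) * g 1 = 0 := by linear_combination h4 - h7
    have hg3 : g 3 = 0 := by
      have h1 := hadd 1 1
      have h2 := hadd 2 1
      norm_num at h1 h2
      rw [h2, h1, show g 1 + g 1 + g 1 = 3 * g 1 from by ring, h3g]
    have : (3 : ZMod 9) = 0 := hb.1 (hg3.trans h0.symm)
    exact absurd this (by decide)
end

section
/- There are exactly three isomorphism classes of Alexander quandle structures on the abelian group ℤ/4ℤ ⊕ ℤ/2ℤ: the trivial quandle (t acting as the identity), one isomorphic to the direct sum Λ₂/(t+1) ⊕ Λ₂/(t²+1), given by the automorphism sending (1,0) ↦ (1,1) and (0,1) ↦ (0,1), and one isomorphic to Λ₂/(t³+t²+t+1), given by the automorphism sending (1,0) ↦ (1,1) and (0,1) ↦ (2,1). -/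
open LaurentPolynomial

/-- Quandle isomorphism between the Alexander quandles `(A, φ)` and `(B, ψ)`,
where the quandle operation of `(A, φ)` is `x ^ y = φ x + y - φ y`. -/
def QuandleIsoAut {A B : Type} [AddCommGroup A] [AddCommGroup B]
    (φ : A ≃+ A) (ψ : B ≃+ B) : Prop :=
  ∃ f : A → B, Function.Bijective f ∧
    ∀ x y : A, f (φ x + y - φ y) = ψ (f x) + f y - ψ (f y)

/-- Quandle isomorphism from the Alexander quandle `(A, φ)` to an Alexander
quandle given by a module `M` over `Λ₂ = 𝔽₂[t,t⁻¹]`, whose quandle operation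
is `a ^ b = t•a + (1-t)•b`. -/
def QuandleIsoMod {A : Type} [AddCommGroup A] (φ : A ≃+ A)
    (M : Type) [AddCommGroup M] [Module (LaurentPolynomial (ZMod 2)) M] : Prop :=
  ∃ f : A → M, Function.Bijective f ∧
    ∀ x y : A, f (φ x + y - φ y) =
      (T 1 : LaurentPolynomial (ZMod 2)) • f x +
        ((1 : LaurentPolynomial (ZMod 2)) - T 1) • f y

/-- `Λ₂/(t+1)` as a `Λ₂`-module. -/
abbrev LQ1 : Type := LaurentPolynomial (ZMod 2) ⧸
  Ideal.span {(T 1 + 1 : LaurentPolynomial (ZMod 2))}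

/-- `Λ₂/(t²+1)` as a `Λ₂`-module. -/
abbrev LQ2 : Type := LaurentPolynomial (ZMod 2) ⧸
  Ideal.span {(T 2 + 1 : LaurentPolynomial (ZMod 2))}

/-- `Λ₂/(t³+t²+t+1)` as a `Λ₂`-module. -/
abbrev LQ3 : Type := LaurentPolynomial (ZMod 2) ⧸
  Ideal.span {(T 3 + T 2 + T 1 + 1 : LaurentPolynomial (ZMod 2))}

/-! ### Auxiliary development -/

namespace AQ

open Polynomial

abbrev Λ₂ := LaurentPolynomial (ZMod 2)

noncomputable def lev {A : Type} [CommRing A] [Algebra (ZMod 2) A] (u : Aˣ) : Λ₂ →ₐ[ZMod 2] A :=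
  AddMonoidAlgebra.lift (ZMod 2) A ℤ ((Units.coeHom A).comp (zpowersHom Aˣ u))

lemma lev_T {A : Type} [CommRing A] [Algebra (ZMod 2) A] (u : Aˣ) (n : ℤ) :
    lev u (T n) = (u ^ n : Aˣ) := by
  rw [lev, LaurentPolynomial.T, AddMonoidAlgebra.lift_single]
  simp [zpowersHom_apply]

lemma lev_toLaurent {A : Type} [CommRing A] [Algebra (ZMod 2) A] (u : Aˣ) (p : (ZMod 2)[X]) :
    lev u (p.toLaurent) = aeval (u : A) p := by
  have h : (lev u).comp (Polynomial.toLaurentAlg) = aeval (u : A) := by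
    apply Polynomial.algHom_ext
    show lev u (toLaurentAlg X) = aeval (u : A) X
    have h1 : toLaurentAlg (X : (ZMod 2)[X]) = T 1 := by
      simp [toLaurentAlg]
    rw [h1, lev_T, aeval_X]
    simp
  calc lev u p.toLaurent = ((lev u).comp Polynomial.toLaurentAlg) p := rfl
  _ = aeval (u : A) p := by rw [h]

section Quot

variable (h : (ZMod 2)[X]) (w : AdjoinRoot h) (hw : AdjoinRoot.root h * w = 1)

noncomputable def ru : (AdjoinRoot h)ˣ :=
  ⟨AdjoinRoot.root h, w, hw, by rw [mul_comm] at hw; exact hw⟩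

noncomputable def ψh : Λ₂ →+* AdjoinRoot h := (lev (ru h w hw)).toRingHom

lemma ψh_toLaurent (p : (ZMod 2)[X]) : ψh h w hw p.toLaurent = AdjoinRoot.mk h p := by
  show lev (ru h w hw) p.toLaurent = _
  rw [lev_toLaurent]
  exact AdjoinRoot.aeval_eq p

lemma ψh_surj : Function.Surjective (ψh h w hw) := by
  intro a
  obtain ⟨p, hp⟩ := AdjoinRoot.mk_surjective a
  exact ⟨p.toLaurent, by rw [ψh_toLaurent, hp]⟩

lemma ψh_ker : RingHom.ker (ψh h w hw) = Ideal.span {h.toLaurent} := by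
  apply le_antisymm
  · intro p hp
    rw [RingHom.mem_ker] at hp
    obtain ⟨n, q, hq⟩ := LaurentPolynomial.exists_T_pow p
    have hq0 : AdjoinRoot.mk h q = 0 := by
      rw [← ψh_toLaurent h w hw, hq, map_mul, hp, zero_mul]
    obtain ⟨r, hr⟩ := AdjoinRoot.mk_eq_zero.mp hq0
    rw [Ideal.mem_span_singleton]
    refine ⟨r.toLaurent * T (-n), ?_⟩
    have : p * T n * T (-n) = p := by
      rw [mul_assoc, ← T_add, add_neg_cancel, T_zero, mul_one]
    rw [← this, ← hq, hr, map_mul, mul_assoc]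
  · rw [Ideal.span_le, Set.singleton_subset_iff]
    show ψh h w hw h.toLaurent = 0
    rw [ψh_toLaurent]
    exact AdjoinRoot.mk_self

lemma ψh_T1 : ψh h w hw (T 1) = AdjoinRoot.root h := by
  show lev (ru h w hw) (T 1) = _
  rw [lev_T]
  simp [ru]

noncomputable def eQ : (Λ₂ ⧸ Ideal.span {h.toLaurent}) ≃+* AdjoinRoot h :=
  (Ideal.quotEquivOfEq (ψh_ker h w hw).symm).trans
    (RingHom.quotientKerEquivOfSurjective (ψh_surj h w hw))

lemma eQ_mk (p : Λ₂) : eQ h w hw (Ideal.Quotient.mk _ p) = ψh h w hw p := by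
  simp [eQ, Ideal.quotEquivOfEq_mk, RingHom.quotientKerEquivOfSurjective]

end Quot

lemma two_eq_zero {B : Type} [CommRing B] [Algebra (ZMod 2) B] : (2 : B) = 0 := by
  have h := map_natCast (algebraMap (ZMod 2) B) 2
  have h2 : ((2 : ℕ) : ZMod 2) = 0 := by decide
  rw [h2, map_zero] at h
  simpa using h.symm

lemma sum_bij (h : (ZMod 2)[X]) (hm : h.Monic) {n : ℕ} (hdim : h.natDegree = n) :
    Function.Bijective
      (fun v : Fin n → ZMod 2 => ∑ i, v i • (AdjoinRoot.root h) ^ (i : ℕ)) := by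
  set pb := AdjoinRoot.powerBasis' hm with hpb
  have hd : pb.dim = n := hdim
  set b := pb.basis.reindex (finCongr hd) with hb
  have key : (fun v : Fin n → ZMod 2 => ∑ i, v i • (AdjoinRoot.root h) ^ (i : ℕ))
      = ⇑(b.equivFun.symm) := by
    funext v
    rw [Module.Basis.equivFun_symm_apply]
    apply Finset.sum_congr rfl
    intro i _
    congr 1
    rw [hb, Module.Basis.reindex_apply, PowerBasis.basis_eq_pow]
    simp [hpb, AdjoinRoot.powerBasis'_gen]
  rw [key]
  exact b.equivFun.symm.bijective

/-! ### The quotient `Λ₂/(t+1)` -/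

noncomputable section L1

def h1 : (ZMod 2)[X] := X + 1

lemma h1monic : h1.Monic := by unfold h1; monicity!

lemma h1deg : h1.natDegree = 1 := by unfold h1; compute_degree!

abbrev A1 := AdjoinRoot h1

lemma hr1 : AdjoinRoot.root h1 = 1 := by
  have h := AdjoinRoot.mk_self (f := h1)
  rw [← AdjoinRoot.aeval_eq] at h
  unfold h1 at h
  simp only [map_add, aeval_X, map_one] at h
  have h2 : (2 : A1) = 0 := two_eq_zero
  have h' : AdjoinRoot.root h1 + 1 = 0 := h
  linear_combination h' - h2

lemma hw1 : AdjoinRoot.root h1 * 1 = 1 := by rw [mul_one, hr1]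

def G1 : ZMod 2 → A1 := fun a => a • (1 : A1)

lemma G1_bij : Function.Bijective G1 := by
  have hb := sum_bij h1 h1monic h1deg
  let e : ZMod 2 ≃ (Fin 1 → ZMod 2) := ⟨fun a => ![a], fun f => f 0, by decide, by decide⟩
  have key : G1 = (fun v : Fin 1 → ZMod 2 => ∑ i, v i • (AdjoinRoot.root h1) ^ (i : ℕ)) ∘ e := by
    funext a
    show G1 a = ∑ i : Fin 1, _
    rw [Fin.sum_univ_one]
    simp [G1, e]
  rw [key]
  exact hb.comp e.bijective

lemma G1_mul (a : ZMod 2) : AdjoinRoot.root h1 * G1 a = G1 a := by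
  rw [hr1, one_mul]

lemma G1_lin (v w z : ZMod 2) : G1 (v + w - z) = G1 v + G1 w - G1 z := by
  simp only [G1, add_smul, sub_smul]

lemma id1 : Ideal.span {(T 1 + 1 : Λ₂)} = Ideal.span {h1.toLaurent} := by
  have : h1.toLaurent = T 1 + 1 := by simp [h1]
  rw [this]

def E1 : LQ1 ≃+* A1 := (Ideal.quotEquivOfEq id1).trans (eQ h1 1 hw1)

lemma E1_mk (p : Λ₂) : E1 (Ideal.Quotient.mk _ p) = ψh h1 1 hw1 p := by
  rw [E1, RingEquiv.trans_apply, Ideal.quotEquivOfEq_mk]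
  exact eQ_mk h1 1 hw1 p

lemma E1_Tsmul (m : LQ1) : E1 ((T 1 : Λ₂) • m) = AdjoinRoot.root h1 * E1 m := by
  obtain ⟨p, rfl⟩ := Ideal.Quotient.mk_surjective m
  have hs : (T 1 : Λ₂) • (Ideal.Quotient.mk (Ideal.span {(T 1 + 1 : Λ₂)}) p)
      = Ideal.Quotient.mk _ ((T 1) * p) := rfl
  rw [hs, E1_mk, E1_mk, map_mul, ψh_T1]

end L1

/-! ### The quotient `Λ₂/(t²+1)` -/

noncomputable section L2

def h2 : (ZMod 2)[X] := X ^ 2 + 1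

lemma h2monic : h2.Monic := by unfold h2; monicity!

lemma h2deg : h2.natDegree = 2 := by unfold h2; compute_degree!

abbrev A2 := AdjoinRoot h2

def r2 : A2 := AdjoinRoot.root h2

lemma hr2 : r2 ^ 2 = 1 := by
  have h := AdjoinRoot.mk_self (f := h2)
  rw [← AdjoinRoot.aeval_eq] at h
  unfold h2 at h
  simp only [map_add, map_pow, aeval_X, map_one] at h
  have h2' : (2 : A2) = 0 := two_eq_zero
  have h' : r2 ^ 2 + 1 = 0 := h
  linear_combination h' - h2'

lemma hw2 : AdjoinRoot.root h2 * r2 = 1 := by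
  show r2 * r2 = 1
  linear_combination hr2

def G2 : ZMod 2 × ZMod 2 → A2 := fun v => v.1 • (1 : A2) + v.2 • r2

lemma G2_bij : Function.Bijective G2 := by
  have hb := sum_bij h2 h2monic h2deg
  let e : ZMod 2 × ZMod 2 ≃ (Fin 2 → ZMod 2) :=
    ⟨fun v => ![v.1, v.2], fun f => (f 0, f 1), by decide, by decide⟩
  have key : G2 = (fun v : Fin 2 → ZMod 2 => ∑ i, v i • (AdjoinRoot.root h2) ^ (i : ℕ)) ∘ e := by
    funext v
    show G2 v = ∑ i : Fin 2, _
    rw [Fin.sum_univ_two]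
    simp [G2, e, r2]
  rw [key]
  exact hb.comp e.bijective

def σ2 : ZMod 2 × ZMod 2 → ZMod 2 × ZMod 2 := fun v => (v.2, v.1)

lemma G2_mul (v : ZMod 2 × ZMod 2) : AdjoinRoot.root h2 * G2 v = G2 (σ2 v) := by
  obtain ⟨a, b⟩ := v
  show r2 * (a • (1 : A2) + b • r2) = b • (1 : A2) + a • r2
  simp only [Algebra.smul_def, map_add]
  ring_nf
  linear_combination (algebraMap (ZMod 2) A2 b) * hr2

lemma G2_lin (v w z : ZMod 2 × ZMod 2) : G2 (v + w - z) = G2 v + G2 w - G2 z := by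
  simp only [G2, Prod.fst_add, Prod.snd_add, Prod.fst_sub, Prod.snd_sub, add_smul, sub_smul]
  ring

lemma id2 : Ideal.span {(T 2 + 1 : Λ₂)} = Ideal.span {h2.toLaurent} := by
  have : h2.toLaurent = T 2 + 1 := by
    simp [h2, Polynomial.toLaurent_X_pow]
  rw [this]

def E2 : LQ2 ≃+* A2 := (Ideal.quotEquivOfEq id2).trans (eQ h2 r2 hw2)

lemma E2_mk (p : Λ₂) : E2 (Ideal.Quotient.mk _ p) = ψh h2 r2 hw2 p := by
  rw [E2, RingEquiv.trans_apply, Ideal.quotEquivOfEq_mk]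
  exact eQ_mk h2 r2 hw2 p

lemma E2_Tsmul (m : LQ2) : E2 ((T 1 : Λ₂) • m) = r2 * E2 m := by
  obtain ⟨p, rfl⟩ := Ideal.Quotient.mk_surjective m
  have hs : (T 1 : Λ₂) • (Ideal.Quotient.mk (Ideal.span {(T 2 + 1 : Λ₂)}) p)
      = Ideal.Quotient.mk _ ((T 1) * p) := rfl
  rw [hs, E2_mk, E2_mk, map_mul, ψh_T1]
  rfl

end L2

/-! ### The quotient `Λ₂/(t³+t²+t+1)` -/

noncomputable section L3

def h3 : (ZMod 2)[X] := X ^ 3 + X ^ 2 + X + 1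

lemma h3monic : h3.Monic := by unfold h3; monicity!

lemma h3deg : h3.natDegree = 3 := by unfold h3; compute_degree!

abbrev A3 := AdjoinRoot h3

def ρ : A3 := AdjoinRoot.root h3

lemma hρ0 : ρ ^ 3 + ρ ^ 2 + ρ + 1 = 0 := by
  have h := AdjoinRoot.mk_self (f := h3)
  rw [← AdjoinRoot.aeval_eq] at h
  unfold h3 at h
  simp only [map_add, map_pow, aeval_X, map_one] at h
  exact h

lemma hρ3 : ρ ^ 3 = ρ ^ 2 + ρ + 1 := by
  have h2 : (2 : A3) = 0 := two_eq_zero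
  linear_combination hρ0 - (ρ ^ 2 + ρ + 1) * h2

lemma hw3 : AdjoinRoot.root h3 * (ρ ^ 2 + ρ + 1) = 1 := by
  have h2 : (2 : A3) = 0 := two_eq_zero
  show ρ * (ρ ^ 2 + ρ + 1) = 1
  linear_combination hρ0 - h2

def G3 : (ZMod 2 × ZMod 2 × ZMod 2) → A3 :=
  fun v => v.1 • (1 : A3) + v.2.1 • ρ + v.2.2 • ρ ^ 2

lemma G3_bij : Function.Bijective G3 := by
  have hb := sum_bij h3 h3monic h3deg
  let e : (ZMod 2 × ZMod 2 × ZMod 2) ≃ (Fin 3 → ZMod 2) :=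
    ⟨fun v => ![v.1, v.2.1, v.2.2], fun f => (f 0, f 1, f 2), by decide, by decide⟩
  have key : G3 = (fun v : Fin 3 → ZMod 2 => ∑ i, v i • (AdjoinRoot.root h3) ^ (i : ℕ)) ∘ e := by
    funext v
    show G3 v = ∑ i : Fin 3, _
    rw [Fin.sum_univ_three]
    simp [G3, e, ρ]
  rw [key]
  exact hb.comp e.bijective

def σ3 : (ZMod 2 × ZMod 2 × ZMod 2) → (ZMod 2 × ZMod 2 × ZMod 2) :=
  fun v => (v.2.2, v.1 + v.2.2, v.2.1 + v.2.2)

lemma G3_mul (v : ZMod 2 × ZMod 2 × ZMod 2) : AdjoinRoot.root h3 * G3 v = G3 (σ3 v) := by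
  obtain ⟨a, b, c⟩ := v
  show ρ * (a • (1 : A3) + b • ρ + c • ρ ^ 2) = c • (1 : A3) + (a + c) • ρ + (b + c) • ρ ^ 2
  simp only [Algebra.smul_def, map_add]
  ring_nf
  linear_combination (algebraMap (ZMod 2) A3 c) * hρ3

lemma G3_lin (v w z : ZMod 2 × ZMod 2 × ZMod 2) : G3 (v + w - z) = G3 v + G3 w - G3 z := by
  simp only [G3, Prod.fst_add, Prod.snd_add, Prod.fst_sub, Prod.snd_sub, add_smul, sub_smul]
  ring

lemma id3 : Ideal.span {(T 3 + T 2 + T 1 + 1 : Λ₂)} = Ideal.span {h3.toLaurent} := by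
  have : h3.toLaurent = T 3 + T 2 + T 1 + 1 := by
    simp [h3, Polynomial.toLaurent_X_pow]
  rw [this]

def E3 : LQ3 ≃+* A3 := (Ideal.quotEquivOfEq id3).trans (eQ h3 (ρ ^ 2 + ρ + 1) hw3)

lemma E3_mk (p : Λ₂) : E3 (Ideal.Quotient.mk _ p) = ψh h3 (ρ ^ 2 + ρ + 1) hw3 p := by
  rw [E3, RingEquiv.trans_apply, Ideal.quotEquivOfEq_mk]
  exact eQ_mk h3 (ρ ^ 2 + ρ + 1) hw3 p

lemma E3_Tsmul (m : LQ3) : E3 ((T 1 : Λ₂) • m) = ρ * E3 m := by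
  obtain ⟨p, rfl⟩ := Ideal.Quotient.mk_surjective m
  have hs : (T 1 : Λ₂) • (Ideal.Quotient.mk (Ideal.span {(T 3 + T 2 + T 1 + 1 : Λ₂)}) p)
      = Ideal.Quotient.mk _ ((T 1) * p) := rfl
  rw [hs, E3_mk, E3_mk, map_mul, ψh_T1]
  rfl

end L3

/-! ### The automorphisms and combinatorial data -/

abbrev AA := ZMod 4 × ZMod 2

def p2 : AA → AA := fun x => (x.1, (x.1.val : ZMod 2) + x.2)
def p3 : AA → AA := fun x => (x.1 + 2 * (x.2.val : ZMod 4), (x.1.val : ZMod 2) + x.2)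
def q3 : AA → AA := fun x => (3 * x.1 + 2 * (x.2.val : ZMod 4), (x.1.val : ZMod 2) + x.2)

def φA : AA ≃+ AA := ⟨⟨p2, p2, by decide, by decide⟩, by decide⟩
def φB : AA ≃+ AA := ⟨⟨p3, q3, by decide, by decide⟩, by decide⟩

lemma decomp (φ : AA ≃+ AA) (x : AA) : φ x = x.1.val • φ (1,0) + x.2.val • φ (0,1) := by
  have hx : x = x.1.val • ((1,0) : AA) + x.2.val • (0,1) := by
    rcases x with ⟨x1, x2⟩
    simp [Prod.ext_iff, nsmul_eq_mul, ZMod.natCast_val, ZMod.cast_id]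
  conv_lhs => rw [hx]
  rw [map_add, map_nsmul, map_nsmul]

def S (g : AA → AA) : Finset (AA × AA) := Finset.univ.filter (fun p => g p.1 + p.2 - g p.2 = p.1)

lemma no_iso (g g' : AA → AA) (hcard : (S g').card < (S g).card) (f : AA → AA)
    (hf : Function.Bijective f)
    (h : ∀ x y : AA, f (g x + y - g y) = g' (f x) + f y - g' (f y)) : False := by
  have hle : (S g).card ≤ (S g').card := by
    apply Finset.card_le_card_of_injOn (fun p => (f p.1, f p.2))
    · rintro ⟨x, y⟩ hxy
      simp only [S, Finset.mem_coe, Finset.mem_filter, Finset.mem_univ, true_and] at hxy ⊢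
      rw [← h x y, hxy]
    · rintro ⟨x1, y1⟩ - ⟨x2, y2⟩ - hxy
      have e1 : f x1 = f x2 := congrArg Prod.fst hxy
      have e2 : f y1 = f y2 := congrArg Prod.snd hxy
      exact Prod.ext (hf.1 e1) (hf.1 e2)
  omega

-- tables for quandle isomorphisms
def fc2 : AA → AA := fun x =>
  match x with
  | (0,0) => (0,0) | (0,1) => (1,0) | (1,0) => (2,0) | (1,1) => (3,0)
  | (2,0) => (0,1) | (2,1) => (1,1) | (3,0) => (2,1) | (3,1) => (3,1)

def fc5 : AA → AA := fun x =>
  match x with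
  | (0,0) => (0,0) | (0,1) => (2,0) | (1,0) => (1,0) | (1,1) => (3,0)
  | (2,0) => (0,1) | (2,1) => (2,1) | (3,0) => (1,1) | (3,1) => (3,1)

def fc6 : AA → AA := fun x =>
  match x with
  | (0,0) => (0,0) | (0,1) => (1,0) | (1,0) => (3,0) | (1,1) => (2,0)
  | (2,0) => (0,1) | (2,1) => (1,1) | (3,0) => (3,1) | (3,1) => (2,1)

def fc7 : AA → AA := fun x =>
  match x with
  | (0,0) => (0,0) | (0,1) => (2,0) | (1,0) => (1,0) | (1,1) => (3,0)
  | (2,0) => (2,1) | (2,1) => (0,1) | (3,0) => (3,1) | (3,1) => (1,1)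

def fc8 : AA → AA := fun x =>
  match x with
  | (0,0) => (0,0) | (0,1) => (0,1) | (1,0) => (1,1) | (1,1) => (1,0)
  | (2,0) => (2,0) | (2,1) => (2,1) | (3,0) => (3,1) | (3,1) => (3,0)

-- tables for module isomorphisms
def tabP : AA → ZMod 2 × (ZMod 2 × ZMod 2) :=
  fun x => (((x.1.val / 2 : ℕ) : ZMod 2), (x.2, (x.1.val : ZMod 2) + x.2))

def tab3 : AA → (ZMod 2 × ZMod 2 × ZMod 2) :=
  fun x => (((x.1.val / 2 : ℕ) : ZMod 2),
    ((x.1.val : ZMod 2) + x.2, x.2 + ((x.1.val / 2 : ℕ) : ZMod 2)))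

lemma tabP_bij : Function.Bijective tabP := by decide

lemma tab3_bij : Function.Bijective tab3 := by decide

lemma keyP : ∀ x y : AA,
    (tabP (p2 x + y - p2 y)).1 = (tabP x).1 + (tabP y).1 - (tabP y).1 ∧
    (tabP (p2 x + y - p2 y)).2 = σ2 ((tabP x).2) + (tabP y).2 - σ2 ((tabP y).2) := by decide

lemma key3 : ∀ x y : AA,
    tab3 (p3 x + y - p3 y) = σ3 (tab3 x) + tab3 y - σ3 (tab3 y) := by decide

end AQ
namespace AQ

lemma good (φ ψ : AA ≃+ AA) (pψ : AA → AA) (hψ : ⇑ψ = pψ)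
    (a b : AA) (ha : φ (1,0) = a) (hb : φ (0,1) = b) (f : AA → AA)
    (hf : Function.Bijective f)
    (hkey : ∀ x y : AA, f ((x.1.val • a + x.2.val • b) + y - (y.1.val • a + y.2.val • b))
        = pψ (f x) + f y - pψ (f y)) :
    QuandleIsoAut φ ψ := by
  refine ⟨f, hf, ?_⟩
  intro x y
  have hφ : ∀ x : AA, φ x = x.1.val • a + x.2.val • b := fun x => by rw [decomp φ x, ha, hb]
  rw [hφ x, hφ y, hψ]
  exact hkey x y

end AQ

set_option maxHeartbeats 2000000 in
set_option synthInstance.maxHeartbeats 1000000 in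
/-- There are exactly three isomorphism classes of Alexander quandle structures
on the abelian group `ℤ/4 ⊕ ℤ/2`: the trivial quandle (`t` acting as the
identity); one given by the automorphism `φ₂` with `φ₂(1,0) = (1,1)`,
`φ₂(0,1) = (0,1)`, isomorphic to `Λ₂/(t+1) ⊕ Λ₂/(t²+1)`; and one given by the
automorphism `φ₃` with `φ₃(1,0) = (1,1)`, `φ₃(0,1) = (2,1)`, isomorphic to
`Λ₂/(t³+t²+t+1)`. -/
theorem alexander_quandles_on_Z4_Z2 :
    ∃ φ₂ φ₃ : (ZMod 4 × ZMod 2) ≃+ (ZMod 4 × ZMod 2),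
      φ₂ (1, 0) = (1, 1) ∧ φ₂ (0, 1) = (0, 1) ∧
      φ₃ (1, 0) = (1, 1) ∧ φ₃ (0, 1) = (2, 1) ∧
      (∀ φ : (ZMod 4 × ZMod 2) ≃+ (ZMod 4 × ZMod 2),
        QuandleIsoAut φ (AddEquiv.refl (ZMod 4 × ZMod 2)) ∨
        QuandleIsoAut φ φ₂ ∨ QuandleIsoAut φ φ₃) ∧
      ¬ QuandleIsoAut (AddEquiv.refl (ZMod 4 × ZMod 2)) φ₂ ∧
      ¬ QuandleIsoAut (AddEquiv.refl (ZMod 4 × ZMod 2)) φ₃ ∧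
      ¬ QuandleIsoAut φ₂ φ₃ ∧
      QuandleIsoMod φ₂ (LQ1 × LQ2) ∧
      QuandleIsoMod φ₃ LQ3 := by
  refine ⟨AQ.φA, AQ.φB, by decide, by decide, by decide, by decide, ?_, ?_, ?_, ?_, ?_, ?_⟩
  · -- classification
    intro φ
    have h00 : φ (0,0) = 0 := map_zero φ
    have hab2 : φ (2,0) = φ (1,0) + φ (1,0) := by
      rw [show ((2,0) : AQ.AA) = (1,0) + (1,0) by decide, map_add]
    have hbb : φ (0,1) + φ (0,1) = 0 := by
      rw [← map_add, show ((0,1) : AQ.AA) + (0,1) = (0,0) by decide, h00]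
    have va : ∀ z : AQ.AA, z = (0,0) ∨ z = (1,0) ∨ z = (2,0) ∨ z = (3,0) ∨
        z = (0,1) ∨ z = (1,1) ∨ z = (2,1) ∨ z = (3,1) := by decide
    rcases va (φ (1,0)) with ha|ha|ha|ha|ha|ha|ha|ha <;>
      rcases va (φ (0,1)) with hb|hb|hb|hb|hb|hb|hb|hb <;>
      first
      | exact absurd (φ.injective (show φ (2,0) = φ (0,0) by
          rw [hab2, ha, h00]; decide)) (by decide)
      | (rw [hb] at hbb; exact absurd hbb (by decide))
      | exact absurd (φ.injective (show φ (0,1) = φ (0,0) by rw [hb, h00]; decide)) (by decide)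
      | exact absurd (φ.injective (show φ (0,1) = φ (2,0) by
          rw [hb, hab2, ha]; decide)) (by decide)
      | exact Or.inl (AQ.good φ (AddEquiv.refl _) id rfl _ _ ha hb id
          Function.bijective_id (by decide))
      | exact Or.inr (Or.inl (AQ.good φ AQ.φA AQ.p2 rfl _ _ ha hb id
          Function.bijective_id (by decide)))
      | exact Or.inr (Or.inr (AQ.good φ AQ.φB AQ.p3 rfl _ _ ha hb id
          Function.bijective_id (by decide)))
      | exact Or.inr (Or.inl (AQ.good φ AQ.φA AQ.p2 rfl _ _ ha hb AQ.fc2 (by decide) (by decide)))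
      | exact Or.inr (Or.inl (AQ.good φ AQ.φA AQ.p2 rfl _ _ ha hb AQ.fc5 (by decide) (by decide)))
      | exact Or.inr (Or.inl (AQ.good φ AQ.φA AQ.p2 rfl _ _ ha hb AQ.fc6 (by decide) (by decide)))
      | exact Or.inr (Or.inl (AQ.good φ AQ.φA AQ.p2 rfl _ _ ha hb AQ.fc7 (by decide) (by decide)))
      | exact Or.inr (Or.inr (AQ.good φ AQ.φB AQ.p3 rfl _ _ ha hb AQ.fc8 (by decide) (by decide)))
  · -- trivial vs φ₂
    rintro ⟨f, hbij, hf⟩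
    obtain ⟨x, hx⟩ := hbij.2 (1,0)
    obtain ⟨y, hy⟩ := hbij.2 (0,0)
    have h := hf x y
    simp only [AddEquiv.refl_apply] at h
    rw [add_sub_cancel_right, hx, hy] at h
    exact absurd h (by decide)
  · -- trivial vs φ₃
    rintro ⟨f, hbij, hf⟩
    obtain ⟨x, hx⟩ := hbij.2 (1,0)
    obtain ⟨y, hy⟩ := hbij.2 (0,0)
    have h := hf x y
    simp only [AddEquiv.refl_apply] at h
    rw [add_sub_cancel_right, hx, hy] at h
    exact absurd h (by decide)
  · -- φ₂ vs φ₃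
    rintro ⟨f, hbij, hf⟩
    exact AQ.no_iso AQ.p2 AQ.p3 (by decide) f hbij hf
  · -- φ₂ module iso
    refine ⟨fun x => (AQ.E1.symm (AQ.G1 (AQ.tabP x).1), AQ.E2.symm (AQ.G2 (AQ.tabP x).2)),
      ?_, ?_⟩
    · have hco : (fun x : AQ.AA => (AQ.E1.symm (AQ.G1 (AQ.tabP x).1),
          AQ.E2.symm (AQ.G2 (AQ.tabP x).2)))
          = (Prod.map (⇑AQ.E1.symm ∘ AQ.G1) (⇑AQ.E2.symm ∘ AQ.G2)) ∘ AQ.tabP := rfl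
      rw [hco]
      exact ((AQ.E1.symm.bijective.comp AQ.G1_bij).prodMap
        (AQ.E2.symm.bijective.comp AQ.G2_bij)).comp AQ.tabP_bij
    · intro x y
      refine Prod.ext ?_ ?_
      · show AQ.E1.symm (AQ.G1 (AQ.tabP (AQ.φA x + y - AQ.φA y)).1)
          = (T 1 : AQ.Λ₂) • AQ.E1.symm (AQ.G1 (AQ.tabP x).1) +
            ((1 : AQ.Λ₂) - T 1) • AQ.E1.symm (AQ.G1 (AQ.tabP y).1)
        apply AQ.E1.injective
        rw [sub_smul, one_smul, map_add, map_sub, AQ.E1_Tsmul, AQ.E1_Tsmul,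
          RingEquiv.apply_symm_apply, RingEquiv.apply_symm_apply, RingEquiv.apply_symm_apply,
          AQ.G1_mul, AQ.G1_mul, show ⇑AQ.φA = AQ.p2 from rfl, (AQ.keyP x y).1,
          AQ.G1_lin, add_sub_assoc]
      · show AQ.E2.symm (AQ.G2 (AQ.tabP (AQ.φA x + y - AQ.φA y)).2)
          = (T 1 : AQ.Λ₂) • AQ.E2.symm (AQ.G2 (AQ.tabP x).2) +
            ((1 : AQ.Λ₂) - T 1) • AQ.E2.symm (AQ.G2 (AQ.tabP y).2)
        apply AQ.E2.injective
        rw [sub_smul, one_smul, map_add, map_sub, AQ.E2_Tsmul, AQ.E2_Tsmul,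
          RingEquiv.apply_symm_apply, RingEquiv.apply_symm_apply, RingEquiv.apply_symm_apply,
          show AQ.r2 = AdjoinRoot.root AQ.h2 from rfl, AQ.G2_mul, AQ.G2_mul,
          show ⇑AQ.φA = AQ.p2 from rfl, (AQ.keyP x y).2, AQ.G2_lin, add_sub_assoc]
  · -- φ₃ module iso
    refine ⟨fun x => AQ.E3.symm (AQ.G3 (AQ.tab3 x)), ?_, ?_⟩
    · exact (AQ.E3.symm.bijective.comp AQ.G3_bij).comp AQ.tab3_bij
    · intro x y
      apply AQ.E3.injective
      rw [sub_smul, one_smul, map_add, map_sub, AQ.E3_Tsmul, AQ.E3_Tsmul,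
        RingEquiv.apply_symm_apply, RingEquiv.apply_symm_apply, RingEquiv.apply_symm_apply,
        show AQ.ρ = AdjoinRoot.root AQ.h3 from rfl, AQ.G3_mul, AQ.G3_mul,
        show ⇑AQ.φB = AQ.p3 from rfl, AQ.key3 x y, AQ.G3_lin, add_sub_assoc]
end
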